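/- arXiv:math/0503421 — 6 statements merged into one kernel-verified Lean document; each statement's English description precedes it below -/
import Mathlib

section
/- Let m and μ be finite positive Borel measures on [0,1] such that μ(I_w) > 0 for every b-adic interval I_w. Let N ≥ 1 be an integer, α ≥ 0, and let (ε_n)_{n≥1} and (η_n)_{n≥1} be sequences of positive real numbers. If the series ∑_{n≥1} S_n^{N,ε_n,η_n}(m,μ,α) converges, then the set E^μ_α(N,ε̃) is of full m-measure, i.e. m([0,1] \ E^μ_α(N,ε̃)) = 0. -/
open MeasureTheory

/-- The closed `b`-adic interval `[k b^{-n}, (k+1) b^{-n}]`. -/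
noncomputable def badicI (b n k : ℕ) : Set ℝ :=
  Set.Icc ((k : ℝ) / (b : ℝ) ^ n) (((k : ℝ) + 1) / (b : ℝ) ^ n)

/-- The index of the `b`-adic interval of generation `n` containing `t` (for `t ∈ [0,1)`). -/
noncomputable def idx (b n : ℕ) (t : ℝ) : ℕ :=
  min ⌊t * (b : ℝ) ^ n⌋₊ (b ^ n - 1)

/-- The quantity `S_n^{N,ε,η}(m,μ,α)`. -/
noncomputable def Sq (b N n : ℕ) (ε η α : ℝ) (m μ : Measure ℝ) : ℝ :=
  ∑ γ ∈ ({-1, 1} : Finset ℤ),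
    (b : ℝ) ^ ((n : ℝ) * (α - (γ : ℝ) * ε) * (γ : ℝ) * η) *
      ∑ k ∈ Finset.range (b ^ n), ∑ l ∈ Finset.range (b ^ n),
        if ((k : ℤ) - (l : ℤ)).natAbs ≤ N then
          (m (badicI b n k)).toReal * ((μ (badicI b n l)).toReal) ^ ((γ : ℝ) * η)
        else 0

/-- The set `E^μ_α(N,ε,γ)` at generation `n`. -/
noncomputable def Eset (b N n : ℕ) (ε α : ℝ) (γ : ℤ) (μ : Measure ℝ) : Set ℝ :=
  {t | t ∈ Set.Icc (0:ℝ) 1 ∧ ∀ k < b ^ n, ((k : ℤ) - (idx b n t : ℤ)).natAbs ≤ N →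
    (b : ℝ) ^ ((γ : ℝ) * (n : ℝ) * (α - (γ : ℝ) * ε)) *
      ((μ (badicI b n k)).toReal) ^ ((γ : ℝ)) ≤ 1}

private lemma idx_lt (b n : ℕ) (hb : 2 ≤ b) (t : ℝ) : idx b n t < b ^ n := by
  have h : 0 < b ^ n := pow_pos (by omega) n
  unfold idx
  omega

private lemma mem_badicI_idx (b n : ℕ) (hb : 2 ≤ b) {t : ℝ} (ht : t ∈ Set.Icc (0:ℝ) 1) :
    t ∈ badicI b n (idx b n t) := by
  have hbn : (0:ℝ) < (b:ℝ) ^ n := by positivity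
  have hbn1 : 1 ≤ b ^ n := Nat.one_le_pow _ _ (by omega)
  have h0 : 0 ≤ t * (b:ℝ) ^ n := mul_nonneg ht.1 hbn.le
  constructor
  · rw [div_le_iff₀ hbn]
    calc ((idx b n t : ℕ) : ℝ) ≤ (⌊t * (b:ℝ) ^ n⌋₊ : ℝ) := by
          exact Nat.cast_le.2 (min_le_left _ _)
      _ ≤ t * (b:ℝ) ^ n := Nat.floor_le h0
  · rw [le_div_iff₀ hbn]
    rcases le_or_gt ⌊t * (b:ℝ) ^ n⌋₊ (b ^ n - 1) with h | h
    · have hidx : idx b n t = ⌊t * (b:ℝ) ^ n⌋₊ := min_eq_left h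
      rw [hidx]
      exact (Nat.lt_floor_add_one _).le
    · have hidx : idx b n t = b ^ n - 1 := min_eq_right (by omega)
      rw [hidx]
      have hcast : ((b ^ n - 1 : ℕ) : ℝ) + 1 = ((b ^ n : ℕ) : ℝ) := by
        rw [Nat.cast_sub hbn1]
        push_cast
        ring
      rw [hcast]
      calc t * (b:ℝ) ^ n ≤ 1 * (b:ℝ) ^ n := by
            apply mul_le_mul_of_nonneg_right ht.2 hbn.le
        _ = ((b ^ n : ℕ) : ℝ) := by push_cast; ring

private lemma sqterm_nonneg (b N n : ℕ) (ε η α : ℝ) (m μ : Measure ℝ) (γ : ℤ) :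
    0 ≤ (b:ℝ) ^ ((n:ℝ) * (α - (γ:ℝ) * ε) * (γ:ℝ) * η) *
      ∑ k ∈ Finset.range (b ^ n), ∑ l ∈ Finset.range (b ^ n),
        if ((k:ℤ) - (l:ℤ)).natAbs ≤ N then
          (m (badicI b n k)).toReal * ((μ (badicI b n l)).toReal) ^ ((γ:ℝ) * η) else 0 := by
  apply mul_nonneg (Real.rpow_nonneg (by positivity) _)
  apply Finset.sum_nonneg; intro k _
  apply Finset.sum_nonneg; intro l _
  split
  · exact mul_nonneg ENNReal.toReal_nonneg (Real.rpow_nonneg ENNReal.toReal_nonneg _)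
  · exact le_refl 0

private lemma measure_bad_le (b N n : ℕ) (hb : 2 ≤ b) (ε η α : ℝ) (hη : 0 < η)
    (m μ : Measure ℝ) [IsFiniteMeasure m] (γ : ℤ) :
    m {t : ℝ | t ∈ Set.Icc (0:ℝ) 1 ∧ ∃ k, k < b ^ n ∧
        ((k:ℤ) - (idx b n t : ℤ)).natAbs ≤ N ∧
        1 < (b:ℝ) ^ ((γ:ℝ) * (n:ℝ) * (α - (γ:ℝ) * ε)) * ((μ (badicI b n k)).toReal) ^ ((γ:ℝ))}
      ≤ ENNReal.ofReal ((b:ℝ) ^ ((n:ℝ) * (α - (γ:ℝ) * ε) * (γ:ℝ) * η) *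
        ∑ k ∈ Finset.range (b ^ n), ∑ l ∈ Finset.range (b ^ n),
          if ((k:ℤ) - (l:ℤ)).natAbs ≤ N then
            (m (badicI b n k)).toReal * ((μ (badicI b n l)).toReal) ^ ((γ:ℝ) * η) else 0) := by
  set x : ℕ → ℝ := fun k =>
    (b:ℝ) ^ ((γ:ℝ) * (n:ℝ) * (α - (γ:ℝ) * ε)) * ((μ (badicI b n k)).toReal) ^ ((γ:ℝ)) with hxdef
  have cover : {t : ℝ | t ∈ Set.Icc (0:ℝ) 1 ∧ ∃ k, k < b ^ n ∧
        ((k:ℤ) - (idx b n t : ℤ)).natAbs ≤ N ∧ 1 < x k} ⊆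
      ⋃ l ∈ Finset.range (b ^ n), ⋃ k ∈ Finset.range (b ^ n),
        (if ((k:ℤ) - (l:ℤ)).natAbs ≤ N ∧ 1 < x k then badicI b n l else ∅) := by
    rintro t ⟨ht, k, hk, hkN, hx1⟩
    refine Set.mem_iUnion₂.2 ⟨idx b n t, Finset.mem_range.2 (idx_lt b n hb t), ?_⟩
    refine Set.mem_iUnion₂.2 ⟨k, Finset.mem_range.2 hk, ?_⟩
    rw [if_pos ⟨hkN, hx1⟩]
    exact mem_badicI_idx b n hb ht
  have hxpow : ∀ c : ℕ, x c ^ η =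
      (b:ℝ) ^ ((n:ℝ) * (α - (γ:ℝ) * ε) * (γ:ℝ) * η) *
        ((μ (badicI b n c)).toReal) ^ ((γ:ℝ) * η) := by
    intro c
    rw [hxdef]
    simp only
    rw [Real.mul_rpow (Real.rpow_nonneg (by positivity) _)
      (Real.rpow_nonneg ENNReal.toReal_nonneg _),
      ← Real.rpow_mul (by positivity : (0:ℝ) ≤ (b:ℝ)),
      ← Real.rpow_mul ENNReal.toReal_nonneg]
    congr 1
    ring
  calc m {t : ℝ | t ∈ Set.Icc (0:ℝ) 1 ∧ ∃ k, k < b ^ n ∧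
        ((k:ℤ) - (idx b n t : ℤ)).natAbs ≤ N ∧ 1 < x k}
      ≤ ∑ l ∈ Finset.range (b ^ n), ∑ k ∈ Finset.range (b ^ n),
        m (if ((k:ℤ) - (l:ℤ)).natAbs ≤ N ∧ 1 < x k then badicI b n l else ∅) := by
        refine (measure_mono cover).trans ?_
        refine (measure_biUnion_finset_le _ _).trans ?_
        exact Finset.sum_le_sum fun l _ => measure_biUnion_finset_le _ _
    _ ≤ ∑ l ∈ Finset.range (b ^ n), ∑ k ∈ Finset.range (b ^ n),
        ENNReal.ofReal (if ((k:ℤ) - (l:ℤ)).natAbs ≤ N then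
          (m (badicI b n l)).toReal * (x k) ^ η else 0) := by
        refine Finset.sum_le_sum fun l _ => Finset.sum_le_sum fun k _ => ?_
        by_cases h : ((k:ℤ) - (l:ℤ)).natAbs ≤ N ∧ 1 < x k
        · rw [if_pos h, if_pos h.1]
          have hxη : 1 ≤ (x k) ^ η := by
            calc (1:ℝ) = 1 ^ η := (Real.one_rpow η).symm
              _ ≤ (x k) ^ η := Real.rpow_le_rpow zero_le_one h.2.le hη.le
          calc m (badicI b n l)
              = ENNReal.ofReal ((m (badicI b n l)).toReal) :=
                (ENNReal.ofReal_toReal (measure_ne_top m _)).symm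
            _ ≤ ENNReal.ofReal ((m (badicI b n l)).toReal * (x k) ^ η) := by
                apply ENNReal.ofReal_le_ofReal
                nlinarith [ENNReal.toReal_nonneg (a := m (badicI b n l))]
        · rw [if_neg h]
          simp only [measure_empty]
          exact zero_le
    _ = ENNReal.ofReal (∑ l ∈ Finset.range (b ^ n), ∑ k ∈ Finset.range (b ^ n),
        if ((k:ℤ) - (l:ℤ)).natAbs ≤ N then
          (m (badicI b n l)).toReal * (x k) ^ η else 0) := by
        rw [ENNReal.ofReal_sum_of_nonneg]
        · refine Finset.sum_congr rfl fun l _ => ?_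
          rw [ENNReal.ofReal_sum_of_nonneg]
          intro k _
          split
          · exact mul_nonneg ENNReal.toReal_nonneg (Real.rpow_nonneg (by
              rw [hxdef]
              exact mul_nonneg (Real.rpow_nonneg (by positivity) _)
                (Real.rpow_nonneg ENNReal.toReal_nonneg _)) _)
          · exact le_refl 0
        · intro l _
          apply Finset.sum_nonneg
          intro k _
          split
          · exact mul_nonneg ENNReal.toReal_nonneg (Real.rpow_nonneg (by
              rw [hxdef]
              exact mul_nonneg (Real.rpow_nonneg (by positivity) _)
                (Real.rpow_nonneg ENNReal.toReal_nonneg _)) _)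
          · exact le_refl 0
    _ = ENNReal.ofReal ((b:ℝ) ^ ((n:ℝ) * (α - (γ:ℝ) * ε) * (γ:ℝ) * η) *
        ∑ k ∈ Finset.range (b ^ n), ∑ l ∈ Finset.range (b ^ n),
          if ((k:ℤ) - (l:ℤ)).natAbs ≤ N then
            (m (badicI b n k)).toReal * ((μ (badicI b n l)).toReal) ^ ((γ:ℝ) * η) else 0) := by
        congr 1
        rw [Finset.mul_sum]
        refine Finset.sum_congr rfl fun a _ => ?_
        rw [Finset.mul_sum]
        refine Finset.sum_congr rfl fun c _ => ?_
        by_cases hc : ((a:ℤ) - (c:ℤ)).natAbs ≤ N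
        · rw [if_pos (show ((c:ℤ) - (a:ℤ)).natAbs ≤ N by omega), if_pos hc, hxpow c]
          ring
        · rw [if_neg (show ¬ ((c:ℤ) - (a:ℤ)).natAbs ≤ N by omega), if_neg hc, mul_zero]

/-- If `∑_{n ≥ 1} S_n^{N,ε_n,η_n}(m,μ,α) < ∞`, then `E^μ_α(N,ε̃)` has full `m`-measure. -/
theorem full_measure_of_summable_S
    (b : ℕ) (hb : 2 ≤ b) (N : ℕ) (hN : 1 ≤ N) (α : ℝ) (hα : 0 ≤ α)
    (m μ : Measure ℝ) [IsFiniteMeasure m] [IsFiniteMeasure μ]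
    (hμpos : ∀ n k, k < b ^ n → 0 < μ (badicI b n k))
    (ε η : ℕ → ℝ) (hε : ∀ n, 1 ≤ n → 0 < ε n) (hη : ∀ n, 1 ≤ n → 0 < η n)
    (hsum : Summable fun n : ℕ => Sq b N (n + 1) (ε (n + 1)) (η (n + 1)) α m μ) :
    m (Set.Icc (0:ℝ) 1 \
        ⋃ p ∈ {p : ℕ | 1 ≤ p}, ⋂ n ∈ {n : ℕ | p ≤ n},
          (Eset b N n (ε n) α (-1) μ ∩ Eset b N n (ε n) α 1 μ)) = 0 := by
  classical
  set s : ℕ → Set ℝ := fun i =>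
    Set.Icc (0:ℝ) 1 \ (Eset b N (i+1) (ε (i+1)) α (-1) μ ∩ Eset b N (i+1) (ε (i+1)) α 1 μ)
    with hsdef
  have hSqnn : ∀ i : ℕ, 0 ≤ Sq b N (i+1) (ε (i+1)) (η (i+1)) α m μ := by
    intro i
    exact Finset.sum_nonneg fun γ _ => sqterm_nonneg b N (i+1) (ε (i+1)) (η (i+1)) α m μ γ
  have hbound : ∀ i : ℕ,
      m (s i) ≤ ENNReal.ofReal (Sq b N (i+1) (ε (i+1)) (η (i+1)) α m μ) := by
    intro i
    have hηn : 0 < η (i+1) := hη (i+1) (by omega)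
    have hsub : s i ⊆
        {t : ℝ | t ∈ Set.Icc (0:ℝ) 1 ∧ ∃ k, k < b ^ (i+1) ∧
          ((k:ℤ) - (idx b (i+1) t : ℤ)).natAbs ≤ N ∧
          1 < (b:ℝ) ^ (((-1:ℤ):ℝ) * ((i+1:ℕ):ℝ) * (α - ((-1:ℤ):ℝ) * ε (i+1))) *
            ((μ (badicI b (i+1) k)).toReal) ^ (((-1:ℤ):ℝ))} ∪
        {t : ℝ | t ∈ Set.Icc (0:ℝ) 1 ∧ ∃ k, k < b ^ (i+1) ∧
          ((k:ℤ) - (idx b (i+1) t : ℤ)).natAbs ≤ N ∧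
          1 < (b:ℝ) ^ (((1:ℤ):ℝ) * ((i+1:ℕ):ℝ) * (α - ((1:ℤ):ℝ) * ε (i+1))) *
            ((μ (badicI b (i+1) k)).toReal) ^ (((1:ℤ):ℝ))} := by
      rintro t ⟨ht, hnot⟩
      rw [Set.mem_inter_iff, not_and_or] at hnot
      rcases hnot with h | h
      · left
        refine ⟨ht, ?_⟩
        rw [Eset, Set.mem_setOf_eq, not_and_or] at h
        rcases h with h | h
        · exact absurd ht h
        · push_neg at h
          exact h
      · right
        refine ⟨ht, ?_⟩
        rw [Eset, Set.mem_setOf_eq, not_and_or] at h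
        rcases h with h | h
        · exact absurd ht h
        · push_neg at h
          exact h
    have h1 := measure_bad_le b N (i+1) hb (ε (i+1)) (η (i+1)) α hηn m μ (-1)
    have h2 := measure_bad_le b N (i+1) hb (ε (i+1)) (η (i+1)) α hηn m μ 1
    have hm : m (s i) ≤ _ + _ := (measure_mono hsub).trans (measure_union_le _ _)
    refine hm.trans ?_
    refine (add_le_add h1 h2).trans ?_
    rw [← ENNReal.ofReal_add (sqterm_nonneg b N (i+1) (ε (i+1)) (η (i+1)) α m μ (-1))
      (sqterm_nonneg b N (i+1) (ε (i+1)) (η (i+1)) α m μ 1)]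
    apply ENNReal.ofReal_le_ofReal
    rw [Sq, Finset.sum_pair (by decide : (-1:ℤ) ≠ 1)]
  have htsum : ∑' i, m (s i) ≠ ⊤ := by
    have h1 : ∑' i, m (s i) ≤
        ∑' i, ENNReal.ofReal (Sq b N (i+1) (ε (i+1)) (η (i+1)) α m μ) :=
      ENNReal.tsum_le_tsum hbound
    have h2 : ∑' i, ENNReal.ofReal (Sq b N (i+1) (ε (i+1)) (η (i+1)) α m μ) =
        ENNReal.ofReal (∑' i, Sq b N (i+1) (ε (i+1)) (η (i+1)) α m μ) :=
      (ENNReal.ofReal_tsum_of_nonneg hSqnn hsum).symm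
    exact ne_top_of_le_ne_top ENNReal.ofReal_ne_top (h1.trans_eq h2)
  have hlim : m (Filter.limsup s Filter.atTop) = 0 :=
    measure_limsup_atTop_eq_zero htsum
  apply measure_mono_null _ hlim
  rintro t ⟨ht1, ht2⟩
  rw [Filter.mem_limsup_iff_frequently_mem, Filter.frequently_atTop]
  intro a
  simp only [Set.mem_iUnion, Set.mem_iInter, Set.mem_setOf_eq, not_exists] at ht2
  push_neg at ht2
  obtain ⟨n', hn', hnot⟩ := ht2 (a+1) (by omega)
  refine ⟨n' - 1, by omega, ?_⟩
  have hn1 : n' - 1 + 1 = n' := by omega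
  refine ⟨ht1, ?_⟩
  rw [hn1]
  exact hnot
end

section
/- Fix an integer b ≥ 2, a compact interval K ⊂ ℝ with positive length, constants h > 1, C > 0, an exponent α ∈ (0, (h−1)/h), and η > 0. Suppose that for every j ≥ 1 and every word w ∈ A^j one is given a family of real random variables (Y^w_q)_{q ∈ K} such that E(|Y^w_q − Y^w_{q'}|^h) ≤ C|q − q'|^h for all q, q' ∈ K. Then with probability one, for all sufficiently large j, for every w ∈ A^j, every integer n ≥ j^{1+η}, and every pair of dyadic rationals q, q' ∈ K of generation n (i.e. q, q' ∈ 2^{−n}ℤ) with |q − q'| = 2^{−n}, one has |Y^w_q − Y^w_{q'}| ≤ |q − q'|^α. -/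
open MeasureTheory Filter
open scoped ENNReal

lemma markov_pair {Ω : Type*} [MeasurableSpace Ω] (P : Measure Ω)
    (f : Ω → ℝ) (hf : Measurable f) (h t M : ℝ) (hh : 0 < h) (ht : 0 < t)
    (hbound : ∫⁻ ω, ENNReal.ofReal (|f ω| ^ h) ∂P ≤ ENNReal.ofReal M) :
    P {ω | t < |f ω|} ≤ ENNReal.ofReal (M / t ^ h) := by
  have hth : (0:ℝ) < t ^ h := Real.rpow_pos_of_pos ht _
  have hmeas : Measurable fun ω => ENNReal.ofReal (|f ω| ^ h) :=
    ((Real.continuous_rpow_const hh.le).measurable.comp hf.abs).ennreal_ofReal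
  have hsub : {ω | t < |f ω|} ⊆ {ω | ENNReal.ofReal (t ^ h) ≤ ENNReal.ofReal (|f ω| ^ h)} :=
    fun ω hω => ENNReal.ofReal_le_ofReal (Real.rpow_le_rpow ht.le (le_of_lt hω) hh.le)
  have hm := (mul_meas_ge_le_lintegral₀ hmeas.aemeasurable (ENNReal.ofReal (t ^ h))).trans hbound
  have h1 : P {ω | t < |f ω|} ≤ ENNReal.ofReal M / ENNReal.ofReal (t ^ h) := by
    rw [ENNReal.le_div_iff_mul_le (Or.inl (by simp [hth])) (Or.inl ENNReal.ofReal_ne_top)]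
    calc P {ω | t < |f ω|} * ENNReal.ofReal (t ^ h)
        ≤ P {ω | ENNReal.ofReal (t ^ h) ≤ ENNReal.ofReal (|f ω| ^ h)} * ENNReal.ofReal (t ^ h) := by
          exact mul_le_mul_left (measure_mono hsub) _
      _ ≤ ENNReal.ofReal M := by rw [mul_comm]; exact hm
  rwa [← ENNReal.ofReal_div_of_pos hth] at h1


/-- Hölder-type chaining estimate on dyadic points, uniformly over the `b^j` words of each
generation `j` (words `w ∈ A^j` are encoded by their index `w < b^j`):  if
`E(|Y^w_q - Y^w_{q'}|^h) ≤ C|q - q'|^h` on the compact interval `K = [u,v]`, then almost surely,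
for all large `j`, all `w ∈ A^j`, all `n ≥ j^{1+η}` and all adjacent dyadic points
`q, q' ∈ K` of generation `n`, one has `|Y^w_q - Y^w_{q'}| ≤ |q - q'|^α`. -/
theorem holder_on_dyadics
    {Ω : Type*} [MeasurableSpace Ω] (P : Measure Ω) [IsProbabilityMeasure P]
    (b : ℕ) (hb : 2 ≤ b) (u v : ℝ) (huv : u < v)
    (h C α η : ℝ) (hh : 1 < h) (hC : 0 < C) (hα : 0 < α) (hαh : α < (h - 1) / h)
    (hη : 0 < η)
    (Y : ℕ → ℕ → ℝ → Ω → ℝ)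
    (hYmeas : ∀ j w q, Measurable (Y j w q))
    (hmom : ∀ j w, 1 ≤ j → w < b ^ j → ∀ q q' : ℝ,
      q ∈ Set.Icc u v → q' ∈ Set.Icc u v →
      ∫⁻ ω, ENNReal.ofReal (|Y j w q ω - Y j w q' ω| ^ h) ∂P
        ≤ ENNReal.ofReal (C * |q - q'| ^ h)) :
    ∀ᵐ ω ∂P, ∃ J : ℕ, ∀ j, J ≤ j → ∀ w, w < b ^ j →
      ∀ n : ℕ, (j : ℝ) ^ ((1:ℝ) + η) ≤ (n : ℝ) →
      ∀ q q' : ℝ, q ∈ Set.Icc u v → q' ∈ Set.Icc u v →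
        (∃ k : ℤ, q = (k : ℝ) / 2 ^ n) → (∃ k : ℤ, q' = (k : ℝ) / 2 ^ n) →
        |q - q'| = 1 / 2 ^ n →
        |Y j w q ω - Y j w q' ω| ≤ |q - q'| ^ α := by
  have hh0 : (0:ℝ) < h := by linarith
  set δ : ℝ := h - α * h - 1 with hδdef
  have hδ : 0 < δ := by
    have := (lt_div_iff₀ hh0).mp hαh
    rw [hδdef]; linarith
  set s : ℝ := (1/2 : ℝ) ^ (δ/2) with hsdef
  have hs0 : 0 < s := Real.rpow_pos_of_pos (by norm_num) _
  have hs1 : s < 1 := Real.rpow_lt_one (by norm_num) (by norm_num) (by positivity)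
  set T : ℕ → ℕ → ℕ → ℤ → Set Ω := fun j w n k =>
    {ω | w < b ^ j ∧ (j:ℝ) ^ ((1:ℝ)+η) ≤ (n:ℝ) ∧ ((k:ℝ)/2^n) ∈ Set.Icc u v ∧
      (((k:ℝ)+1)/2^n) ∈ Set.Icc u v ∧
      ((1:ℝ)/2^n) ^ α < |Y j w ((k:ℝ)/2^n) ω - Y j w (((k:ℝ)+1)/2^n) ω|} with hT
  set S : ℕ → Set Ω := fun j => ⋃ (w : ℕ) (n : ℕ) (k : ℤ), T j w n k with hSdef
  -- per pair bound
  have hhalf : ∀ n : ℕ, ((1:ℝ)/2)^n = 1/2^n := fun n => by rw [div_pow, one_pow]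
  have hpair : ∀ j w n (k : ℤ), 1 ≤ j →
      P (T j w n k) ≤ ENNReal.ofReal (C * ((1:ℝ)/2)^n) *
        ENNReal.ofReal (s ^ ((j:ℝ) ^ ((1:ℝ)+η))) * ENNReal.ofReal s ^ n := by
    intro j w n k hj
    by_cases hc : w < b ^ j ∧ (j:ℝ) ^ ((1:ℝ)+η) ≤ (n:ℝ) ∧ ((k:ℝ)/2^n) ∈ Set.Icc u v ∧
        (((k:ℝ)+1)/2^n) ∈ Set.Icc u v
    · obtain ⟨hw, hn, hq, hq'⟩ := hc
      have x0 : (0:ℝ) < ((1:ℝ)/2)^n := by positivity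
      have habs : |(k:ℝ)/2^n - ((k:ℝ)+1)/2^n| = ((1:ℝ)/2)^n := by
        rw [hhalf, div_sub_div_same]
        rw [show (k:ℝ) - ((k:ℝ)+1) = -1 by ring]
        rw [abs_div, abs_neg, abs_one, abs_of_pos (by positivity : (0:ℝ) < (2:ℝ)^n)]
      have hmb := hmom j w hj hw _ _ hq hq'
      rw [habs] at hmb
      have hTsub : T j w n k ⊆
          {ω | (((1:ℝ)/2)^n) ^ α < |Y j w ((k:ℝ)/2^n) ω - Y j w (((k:ℝ)+1)/2^n) ω|} := by
        intro ω hω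
        rw [hT] at hω
        simpa [hhalf n] using hω.2.2.2.2
      have hmk := markov_pair P (fun ω => Y j w ((k:ℝ)/2^n) ω - Y j w (((k:ℝ)+1)/2^n) ω)
        ((hYmeas j w _).sub (hYmeas j w _)) h ((((1:ℝ)/2)^n) ^ α)
        (C * (((1:ℝ)/2)^n) ^ h) hh0 (Real.rpow_pos_of_pos x0 _) hmb
      -- arithmetic on the real bound
      have e2 : (((1:ℝ)/2)^n : ℝ) ^ (δ:ℝ) = s^n * s^n := by
        rw [← Real.rpow_natCast (1/2:ℝ) n, ← Real.rpow_mul (by norm_num : (0:ℝ) ≤ 1/2)]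
        rw [show (n:ℝ) * δ = (δ/2) * n + (δ/2) * n by ring,
          Real.rpow_add (by norm_num : (0:ℝ) < 1/2),
          Real.rpow_mul (by norm_num : (0:ℝ) ≤ 1/2), Real.rpow_natCast, ← hsdef]
      have e3 : C * (((1:ℝ)/2)^n) ^ h / ((((1:ℝ)/2)^n) ^ α) ^ h
          = C * ((1:ℝ)/2)^n * (s^n * s^n) := by
        rw [← Real.rpow_mul x0.le α h, mul_div_assoc, ← Real.rpow_sub x0,
          show h - α * h = 1 + δ by rw [hδdef]; ring,
          Real.rpow_add x0, Real.rpow_one, e2, mul_assoc]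
      refine (measure_mono hTsub).trans (hmk.trans ?_)
      rw [e3]
      have hsn : s^n ≤ s ^ ((j:ℝ) ^ ((1:ℝ)+η)) := by
        rw [← Real.rpow_natCast s n]
        exact Real.rpow_le_rpow_of_exponent_ge hs0 hs1.le hn
      have hle : C * ((1:ℝ)/2)^n * (s^n * s^n)
          ≤ C * ((1:ℝ)/2)^n * (s ^ ((j:ℝ) ^ ((1:ℝ)+η)) * s^n) := by
        have h1 : (0:ℝ) ≤ s^n := by positivity
        have h2 : (0:ℝ) ≤ C * ((1:ℝ)/2)^n := by positivity
        exact mul_le_mul_of_nonneg_left (mul_le_mul_of_nonneg_right hsn h1) h2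
      refine (ENNReal.ofReal_le_ofReal hle).trans (le_of_eq ?_)
      rw [ENNReal.ofReal_mul (by positivity), ENNReal.ofReal_mul (by positivity),
        ENNReal.ofReal_mul (by positivity), ENNReal.ofReal_pow hs0.le]
      ring
    · have hemp : T j w n k = ∅ := by
        rw [hT]; ext ω
        simp only [Set.mem_setOf_eq, Set.mem_empty_iff_false, iff_false]
        rintro ⟨h1, h2, h3, h4, h5⟩; exact hc ⟨h1, h2, h3, h4⟩
      simp [hemp]
  -- sum over k
  have hksum : ∀ j w n, 1 ≤ j →
      ∑' k : ℤ, P (T j w n k) ≤ ENNReal.ofReal (C * (v - u + 1)) *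
        ENNReal.ofReal (s ^ ((j:ℝ) ^ ((1:ℝ)+η))) * ENNReal.ofReal s ^ n := by
    intro j w n hj
    have h2n : (0:ℝ) < (2:ℝ)^n := by positivity
    set F : Finset ℤ := Finset.Icc ⌈u * 2^n⌉ ⌊v * 2^n⌋ with hF
    have hvan : ∀ k ∉ F, P (T j w n k) = 0 := by
      intro k hk
      have hemp : T j w n k = ∅ := by
        rw [hT]; ext ω
        simp only [Set.mem_setOf_eq, Set.mem_empty_iff_false, iff_false]
        rintro ⟨-, -, ⟨hq1, -⟩, ⟨-, hq4⟩, -⟩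
        apply hk
        rw [hF, Finset.mem_Icc]
        constructor
        · exact Int.ceil_le.mpr ((le_div_iff₀ h2n).mp hq1)
        · refine Int.le_floor.mpr ?_
          have := (div_le_iff₀ h2n).mp hq4
          linarith
      simp [hemp]
    have hcard : Nat.cast F.card ≤ (ENNReal.ofReal ((v - u + 1) * 2^n) : ℝ≥0∞) := by
      have hcardR : Nat.cast F.card ≤ ((v - u + 1) * 2^n : ℝ) := by
        rw [hF, Int.card_Icc]
        rcases le_or_gt (⌊v * 2^n⌋ + 1 - ⌈u * 2^n⌉) 0 with hle | hpos
        · rw [Int.toNat_of_nonpos hle]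
          push_cast
          nlinarith [pow_pos (by norm_num : (0:ℝ) < 2) n, huv]
        · have he : (((⌊v * 2^n⌋ + 1 - ⌈u * 2^n⌉).toNat : ℕ) : ℝ)
              = ((⌊v * 2^n⌋ + 1 - ⌈u * 2^n⌉ : ℤ) : ℝ) := by
            exact_mod_cast congrArg Int.cast (Int.toNat_of_nonneg hpos.le)
          rw [he]
          push_cast
          have h1 : ((⌊v * 2^n⌋ : ℤ) : ℝ) ≤ v * 2^n := Int.floor_le _
          have h2 : u * 2^n ≤ ((⌈u * 2^n⌉ : ℤ) : ℝ) := Int.le_ceil _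
          have h3 : (1:ℝ) ≤ 2^n := one_le_pow₀ (by norm_num)
          linarith
      have ecast : (F.card : ℝ≥0∞) = ENNReal.ofReal (F.card : ℝ) :=
        (ENNReal.ofReal_natCast _).symm
      rw [ecast]
      exact ENNReal.ofReal_le_ofReal hcardR
    have hXY : ENNReal.ofReal ((v - u + 1) * 2^n) * ENNReal.ofReal (C * ((1:ℝ)/2)^n)
        = ENNReal.ofReal (C * (v - u + 1)) := by
      rw [← ENNReal.ofReal_mul
        (by nlinarith [pow_pos (by norm_num : (0:ℝ) < 2) n, huv] : (0:ℝ) ≤ (v - u + 1) * 2^n)]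
      congr 1
      rw [hhalf]
      field_simp
    calc ∑' k : ℤ, P (T j w n k) = ∑ k ∈ F, P (T j w n k) := tsum_eq_sum hvan
      _ ≤ F.card • (ENNReal.ofReal (C * ((1:ℝ)/2)^n) *
          ENNReal.ofReal (s ^ ((j:ℝ) ^ ((1:ℝ)+η))) * ENNReal.ofReal s ^ n) :=
        Finset.sum_le_card_nsmul _ _ _ (fun k _ => hpair j w n k hj)
      _ = (F.card : ℝ≥0∞) * (ENNReal.ofReal (C * ((1:ℝ)/2)^n) *
          ENNReal.ofReal (s ^ ((j:ℝ) ^ ((1:ℝ)+η))) * ENNReal.ofReal s ^ n) := by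
        rw [nsmul_eq_mul]
      _ ≤ ENNReal.ofReal ((v - u + 1) * 2^n) * (ENNReal.ofReal (C * ((1:ℝ)/2)^n) *
          ENNReal.ofReal (s ^ ((j:ℝ) ^ ((1:ℝ)+η))) * ENNReal.ofReal s ^ n) :=
        mul_le_mul_left hcard _
      _ = ENNReal.ofReal (C * (v - u + 1)) *
          ENNReal.ofReal (s ^ ((j:ℝ) ^ ((1:ℝ)+η))) * ENNReal.ofReal s ^ n := by
        rw [← hXY]; ring
  -- sum over n and w
  have hnsum : ∀ j, 1 ≤ j → P (S j) ≤ (b:ℝ≥0∞)^j * (ENNReal.ofReal (C * (v - u + 1)) *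
      ENNReal.ofReal (s ^ ((j:ℝ) ^ ((1:ℝ)+η))) * (1 - ENNReal.ofReal s)⁻¹) := by
    intro j hj
    have hSle : P (S j) ≤ ∑' (w : ℕ), ∑' (n : ℕ), ∑' (k : ℤ), P (T j w n k) := by
      rw [hSdef]
      refine (measure_iUnion_le _).trans (ENNReal.tsum_le_tsum fun w => ?_)
      refine (measure_iUnion_le _).trans (ENNReal.tsum_le_tsum fun n => ?_)
      exact measure_iUnion_le _
    have hinner : ∀ w : ℕ, ∑' (n : ℕ), ∑' (k : ℤ), P (T j w n k) ≤
        ENNReal.ofReal (C * (v - u + 1)) * ENNReal.ofReal (s ^ ((j:ℝ) ^ ((1:ℝ)+η))) *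
          (1 - ENNReal.ofReal s)⁻¹ := by
      intro w
      calc ∑' (n : ℕ), ∑' (k : ℤ), P (T j w n k)
          ≤ ∑' (n : ℕ), (ENNReal.ofReal (C * (v - u + 1)) *
            ENNReal.ofReal (s ^ ((j:ℝ) ^ ((1:ℝ)+η)))) * ENNReal.ofReal s ^ n :=
          ENNReal.tsum_le_tsum fun n => le_of_le_of_eq (hksum j w n hj) (by ring)
        _ = (ENNReal.ofReal (C * (v - u + 1)) * ENNReal.ofReal (s ^ ((j:ℝ) ^ ((1:ℝ)+η)))) *
            (1 - ENNReal.ofReal s)⁻¹ := by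
          rw [ENNReal.tsum_mul_left, ENNReal.tsum_geometric]
    have hzero : ∀ w ∉ Finset.range (b^j), ∑' (n : ℕ), ∑' (k : ℤ), P (T j w n k) = 0 := by
      intro w hw
      have hwb : ¬ w < b ^ j := by simpa using hw
      have hemp : ∀ (n : ℕ) (k : ℤ), T j w n k = ∅ := by
        intro n k
        rw [hT]; ext ω
        simp only [Set.mem_setOf_eq, Set.mem_empty_iff_false, iff_false]
        rintro ⟨h1, -⟩; exact hwb h1
      simp [hemp]
    calc P (S j) ≤ ∑' (w : ℕ), ∑' (n : ℕ), ∑' (k : ℤ), P (T j w n k) := hSle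
      _ = ∑ w ∈ Finset.range (b^j), ∑' (n : ℕ), ∑' (k : ℤ), P (T j w n k) := tsum_eq_sum hzero
      _ ≤ (Finset.range (b^j)).card • (ENNReal.ofReal (C * (v - u + 1)) *
          ENNReal.ofReal (s ^ ((j:ℝ) ^ ((1:ℝ)+η))) * (1 - ENNReal.ofReal s)⁻¹) :=
        Finset.sum_le_card_nsmul _ _ _ (fun w _ => hinner w)
      _ = (b:ℝ≥0∞)^j * (ENNReal.ofReal (C * (v - u + 1)) *
          ENNReal.ofReal (s ^ ((j:ℝ) ^ ((1:ℝ)+η))) * (1 - ENNReal.ofReal s)⁻¹) := by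
        rw [Finset.card_range, nsmul_eq_mul]
        push_cast
        ring
    -- finiteness of the series
  have hofs1 : ENNReal.ofReal s < 1 := ENNReal.ofReal_lt_one.mpr hs1
  have hinvne : (1 - ENNReal.ofReal s)⁻¹ ≠ ⊤ := by
    refine ENNReal.inv_ne_top.mpr ?_
    simp only [ne_eq, tsub_eq_zero_iff_le, not_le]
    exact hofs1
  set G : ℕ → ℝ := fun j => (b:ℝ)^j * s ^ ((j:ℝ) ^ ((1:ℝ)+η)) with hG
  have hGnn : ∀ j, 0 ≤ G j := fun j =>
    mul_nonneg (by positivity) (Real.rpow_nonneg hs0.le _)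
  obtain ⟨m, hm⟩ : ∃ m : ℕ, (b:ℝ) * s ^ m ≤ 1/2 := by
    have ht : Filter.Tendsto (fun m : ℕ => (b:ℝ) * s ^ m) atTop (nhds 0) := by
      have := tendsto_pow_atTop_nhds_zero_of_lt_one hs0.le hs1
      simpa using this.const_mul (b:ℝ)
    obtain ⟨m, hm'⟩ := (ht.eventually_lt_const (by norm_num : (0:ℝ) < 1/2)).exists
    exact ⟨m, hm'.le⟩
  obtain ⟨J1, hJ1⟩ : ∃ J1 : ℕ, ∀ j, J1 ≤ j → (m:ℝ) ≤ (j:ℝ) ^ η := by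
    have ht : Filter.Tendsto (fun j : ℕ => (j:ℝ) ^ η) atTop atTop :=
      (tendsto_rpow_atTop hη).comp tendsto_natCast_atTop_atTop
    exact eventually_atTop.mp (ht.eventually_ge_atTop (m:ℝ))
  have hGle : ∀ j, max J1 1 ≤ j → G j ≤ (1/2:ℝ)^j := by
    intro j hj
    have hj1 : (1:ℝ) ≤ (j:ℝ) := by
      have : (1:ℕ) ≤ j := le_trans (le_max_right J1 1) hj
      exact_mod_cast this
    have hmj : (m:ℝ) * (j:ℝ) ≤ (j:ℝ) ^ ((1:ℝ)+η) := by
      rw [Real.rpow_add (by linarith : (0:ℝ) < (j:ℝ)), Real.rpow_one]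
      have h1 := hJ1 j (le_trans (le_max_left J1 1) hj)
      nlinarith [h1, hj1]
    have hs' : s ^ ((j:ℝ) ^ ((1:ℝ)+η)) ≤ s ^ ((m:ℝ) * (j:ℝ)) :=
      Real.rpow_le_rpow_of_exponent_ge hs0 hs1.le hmj
    have e : s ^ ((m:ℝ) * (j:ℝ)) = ((s ^ m) ^ j : ℝ) := by
      rw [← Real.rpow_natCast s m, ← Real.rpow_natCast (s ^ ((m:ℝ))) j,
        ← Real.rpow_mul hs0.le]
    calc G j ≤ (b:ℝ)^j * (s ^ m)^j := by
          have h2 : s ^ ((j:ℝ)^((1:ℝ)+η)) ≤ (s^m)^j := by rw [← e]; exact hs'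
          exact mul_le_mul_of_nonneg_left h2 (by positivity)
      _ = ((b:ℝ) * s^m)^j := (mul_pow _ _ _).symm
      _ ≤ (1/2:ℝ)^j := pow_le_pow_left₀ (by positivity) hm j
  have hGsum : Summable G := by
    rw [← summable_nat_add_iff (max J1 1)]
    refine Summable.of_nonneg_of_le (fun n => hGnn _) (fun n => hGle _ (by omega)) ?_
    have hsg : Summable (fun n : ℕ => (1/2:ℝ)^n * (1/2:ℝ)^(max J1 1)) :=
      (summable_geometric_of_lt_one (by norm_num) (by norm_num)).mul_right _
    exact hsg.congr fun n => by rw [← pow_add]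
  have hSbound : ∀ j : ℕ, P (S (j+1)) ≤
      ENNReal.ofReal (C * (v - u + 1)) * (1 - ENNReal.ofReal s)⁻¹ * ENNReal.ofReal (G (j+1)) := by
    intro j
    refine (hnsum (j+1) (by omega)).trans (le_of_eq ?_)
    have hbcast : ((b:ℕ) : ℝ≥0∞)^(j+1) = ENNReal.ofReal ((b:ℝ)^(j+1)) := by
      rw [ENNReal.ofReal_pow (by positivity), ENNReal.ofReal_natCast]
    have hsplit : ENNReal.ofReal (G (j+1)) = ENNReal.ofReal ((b:ℝ)^(j+1)) *
        ENNReal.ofReal (s ^ (((j+1:ℕ)):ℝ) ^ ((1:ℝ)+η)) := by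
      simp only [hG]
      exact ENNReal.ofReal_mul (by positivity)
    rw [hbcast, hsplit]
    ring
  have hsumfin : (∑' j, P (S j)) ≠ ⊤ := by
    have h0 : (∑' j, P (S j)) = P (S 0) + ∑' j, P (S (j+1)) :=
      tsum_eq_zero_add' ENNReal.summable
    rw [h0]
    refine ENNReal.add_ne_top.mpr ⟨measure_ne_top P _, ?_⟩
    have hle : ∑' j, P (S (j+1)) ≤ ENNReal.ofReal (C * (v - u + 1)) *
        (1 - ENNReal.ofReal s)⁻¹ * ∑' j, ENNReal.ofReal (G (j+1)) := by
      rw [← ENNReal.tsum_mul_left]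
      exact ENNReal.tsum_le_tsum hSbound
    refine ne_top_of_le_ne_top ?_ hle
    refine ENNReal.mul_ne_top (ENNReal.mul_ne_top ENNReal.ofReal_ne_top hinvne) ?_
    rw [← ENNReal.ofReal_tsum_of_nonneg (fun j => hGnn _) ((summable_nat_add_iff 1).mpr hGsum)]
    exact ENNReal.ofReal_ne_top
  -- Borel-Cantelli and conclusion
  filter_upwards [ae_eventually_notMem hsumfin] with ω hω
  obtain ⟨J, hJ⟩ := eventually_atTop.mp hω
  refine ⟨J, fun j hj w hw n hn q q' hq hq' hkq hkq' habs => ?_⟩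
  obtain ⟨k, rfl⟩ := hkq
  obtain ⟨k', rfl⟩ := hkq'
  have hnotS := hJ j hj
  simp only [hSdef, Set.mem_iUnion, not_exists] at hnotS
  have key : ∀ k : ℤ, ((k:ℝ)/2^n) ∈ Set.Icc u v → (((k:ℝ)+1)/2^n) ∈ Set.Icc u v →
      |Y j w ((k:ℝ)/2^n) ω - Y j w (((k:ℝ)+1)/2^n) ω| ≤ ((1:ℝ)/2^n) ^ α := by
    intro k h1 h2
    by_contra hlt
    push_neg at hlt
    exact hnotS w n k ⟨hw, hn, h1, h2, hlt⟩
  have h2n : (0:ℝ) < (2:ℝ)^n := by positivity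
  have hkk : |(k:ℝ) - (k':ℝ)| = 1 := by
    have e : |(k:ℝ)/2^n - (k':ℝ)/2^n| = |(k:ℝ) - (k':ℝ)| / 2^n := by
      rw [← sub_div, abs_div, abs_of_pos h2n]
    rw [e] at habs
    field_simp at habs
    linarith
  have hcase : k' = k + 1 ∨ k = k' + 1 := by
    have hZ : |k - k'| = 1 := by
      have hc : ((|k - k'| : ℤ) : ℝ) = 1 := by push_cast; exact hkk
      exact_mod_cast hc
    rcases (abs_eq (by norm_num : (0:ℤ) ≤ 1)).mp hZ with h' | h'
    · right; omega
    · left; omega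
  rw [habs]
  rcases hcase with h' | h'
  · have e : (k':ℝ) = (k:ℝ) + 1 := by exact_mod_cast congrArg (Int.cast : ℤ → ℝ) h'
    rw [e] at hq' ⊢
    exact key k hq hq'
  · have e : (k:ℝ) = (k':ℝ) + 1 := by exact_mod_cast congrArg (Int.cast : ℤ → ℝ) h'
    rw [abs_sub_comm]
    rw [e] at hq ⊢
    exact key k' hq' hq
end

section
/- Fix an integer b ≥ 2, constants C > 0, x₀ > 0, γ ∈ (0,1), θ > 0 with θγ/(1−γ) > 1, and δ ∈ ((θγ/(1−γ))^{−1}, 1). Suppose that for all integers j, n ≥ 1 and all words w ∈ A^j, v ∈ A^n one is given a nonnegative random variable Z^{w,v} such that ℙ(Z^{w,v} ≤ x) ≤ exp(−C x^{−γ/(1−γ)}) for every x ∈ (0, x₀]. Then with probability one, for all sufficiently large j, for every integer n ≥ j^δ and all w ∈ A^j, v ∈ A^n, one has Z^{w,v} ≥ n^{−θ}. -/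
open MeasureTheory ENNReal

/-- Sum of a constant over `v < N`. -/
lemma aux_tsum_ite (N : ℕ) (c : ℝ≥0∞) :
    (∑' v : ℕ, if v < N then c else 0) = (N : ℝ≥0∞) * c := by
  rw [tsum_eq_sum (s := Finset.range N)
    (fun v hv => by simp only [Finset.mem_range] at hv; simp [hv])]
  rw [Finset.sum_congr rfl (fun v hv => if_pos (Finset.mem_range.mp hv))]
  simp [mul_comm]

/-- Threshold lemma: beyond `max 1 ((M/C)^e⁻¹)`, one has `M ≤ C * t ^ e`. -/
lemma aux_thresh {C e M : ℝ} (hC : 0 < C) (hM : 0 ≤ M) (he : 0 < e) :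
    ∀ t : ℝ, max 1 ((M / C) ^ e⁻¹) ≤ t → M ≤ C * t ^ e := by
  intro t ht
  have h1 : (1 : ℝ) ≤ t := le_trans (le_max_left _ _) ht
  have h2 : (M / C) ^ e⁻¹ ≤ t := le_trans (le_max_right _ _) ht
  have hMC : 0 ≤ M / C := div_nonneg hM hC.le
  have hkey : M / C ≤ t ^ e := by
    calc M / C = ((M / C) ^ e⁻¹) ^ e := (Real.rpow_inv_rpow hMC he.ne').symm
    _ ≤ t ^ e := Real.rpow_le_rpow (Real.rpow_nonneg hMC _) h2 he.le
  calc M = C * (M / C) := by field_simp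
  _ ≤ C * t ^ e := mul_le_mul_of_nonneg_left hkey hC.le

set_option maxHeartbeats 1000000 in
/-- Double-index version: the nonnegative variables `Z^{w,v}`, `w ∈ A^j`, `v ∈ A^n`
(words encoded by `w < b^j`, `v < b^n`), satisfy the lower-tail bound
`ℙ(Z^{w,v} ≤ x) ≤ exp(-C x^{-γ/(1-γ)})` for small `x`.  If `θγ/(1-γ) > 1` and
`δ ∈ ((θγ/(1-γ))⁻¹, 1)`, then almost surely, for all large `j`, for every `n ≥ j^δ`
and all `w ∈ A^j`, `v ∈ A^n`, one has `Z^{w,v} ≥ n^{-θ}`. -/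
theorem lower_bound_uniform_double
    {Ω : Type*} [MeasurableSpace Ω] (P : Measure Ω) [IsProbabilityMeasure P]
    (b : ℕ) (hb : 2 ≤ b)
    (C x₀ γ θ δ : ℝ) (hC : 0 < C) (hx₀ : 0 < x₀) (hγ : γ ∈ Set.Ioo (0:ℝ) 1)
    (hθ : 0 < θ) (hθγ : 1 < θ * γ / (1 - γ))
    (hδ : δ ∈ Set.Ioo ((θ * γ / (1 - γ))⁻¹) 1)
    (Z : ℕ → ℕ → ℕ → ℕ → Ω → ℝ) (hZnn : ∀ j w n v ω, 0 ≤ Z j w n v ω)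
    (htail : ∀ j w n v, 1 ≤ j → w < b ^ j → 1 ≤ n → v < b ^ n →
      ∀ x ∈ Set.Ioc (0:ℝ) x₀,
      P {ω | Z j w n v ω ≤ x} ≤ ENNReal.ofReal (Real.exp (-C * x ^ (-(γ / (1 - γ)))))) :
    ∀ᵐ ω ∂P, ∃ J : ℕ, ∀ j, J ≤ j → ∀ n : ℕ, (j : ℝ) ^ δ ≤ (n : ℝ) →
      ∀ w, w < b ^ j → ∀ v, v < b ^ n →
      (n : ℝ) ^ (-θ) ≤ Z j w n v ω := by
  obtain ⟨hγ0, hγ1⟩ := hγ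
  obtain ⟨hδα, hδ1⟩ := hδ
  set α : ℝ := θ * γ / (1 - γ) with hα_def
  have hα1 : 1 < α := hθγ
  have hα0 : 0 < α := lt_trans one_pos hα1
  have hδ0 : 0 < δ := lt_trans (inv_pos.mpr hα0) hδα
  have hβ1 : 1 < δ * α := by
    have := mul_lt_mul_of_pos_right hδα hα0
    rwa [inv_mul_cancel₀ hα0.ne'] at this
  have hb2 : (2 : ℝ) ≤ (b : ℝ) := by exact_mod_cast hb
  have hb1 : (1 : ℝ) < (b : ℝ) := by linarith
  have hb0 : (0 : ℝ) < (b : ℝ) := lt_trans one_pos hb1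
  have hlogb : 0 < Real.log b := Real.log_pos hb1
  set L : ℝ := Real.log b + 1 with hL_def
  have hL : 0 < L := by positivity
  -- thresholds
  set R₁ : ℝ := max 1 ((2 * L / C) ^ (α - 1)⁻¹) with hR₁_def
  have hR₁ : ∀ t : ℝ, R₁ ≤ t → 2 * L ≤ C * t ^ (α - 1) :=
    aux_thresh hC (by positivity) (by linarith)
  set R₂ : ℝ := max 1 ((2 * L / C) ^ (δ * α - 1)⁻¹) with hR₂_def
  have hR₂ : ∀ t : ℝ, R₂ ≤ t → 2 * L ≤ C * t ^ (δ * α - 1) :=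
    aux_thresh hC (by positivity) (by linarith)
  set R₀ : ℝ := max 1 (x₀ ^ (-θ⁻¹)) with hR₀_def
  have hR₀ : ∀ t : ℝ, R₀ ≤ t → t ^ (-θ) ≤ x₀ := by
    intro t ht
    have h1 : (1 : ℝ) ≤ t := le_trans (le_max_left _ _) ht
    have hs0 : (0 : ℝ) < x₀ ^ (-θ⁻¹) := Real.rpow_pos_of_pos hx₀ _
    have h2 : x₀ ^ (-θ⁻¹) ≤ t := le_trans (le_max_right _ _) ht
    have : t ^ (-θ) ≤ (x₀ ^ (-θ⁻¹)) ^ (-θ) :=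
      Real.rpow_le_rpow_of_nonpos hs0 h2 (by linarith)
    calc t ^ (-θ) ≤ (x₀ ^ (-θ⁻¹)) ^ (-θ) := this
    _ = x₀ ^ ((-θ⁻¹) * (-θ)) := (Real.rpow_mul hx₀.le _ _).symm
    _ = x₀ := by
        rw [neg_mul_neg, inv_mul_cancel₀ hθ.ne', Real.rpow_one]
  set Mx : ℝ := max R₀ R₁ with hMx_def
  have hMx1 : (1 : ℝ) ≤ Mx := le_trans (le_max_left 1 _) (le_max_left R₀ R₁)
  obtain ⟨J₀, hJ₀⟩ := exists_nat_ge (max (max 1 R₂) (Mx ^ δ⁻¹))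
  have hJ₀1 : (1 : ℝ) ≤ (J₀ : ℝ) :=
    le_trans (le_trans (le_max_left 1 R₂) (le_max_left _ _)) hJ₀
  have hJ₀R₂ : R₂ ≤ (J₀ : ℝ) :=
    le_trans (le_trans (le_max_right 1 R₂) (le_max_left _ _)) hJ₀
  have hJ₀Mx : Mx ^ δ⁻¹ ≤ (J₀ : ℝ) := le_trans (le_max_right _ _) hJ₀
  -- for j ≥ J₀, j^δ ≥ Mx
  have hjδMx : ∀ j : ℕ, J₀ ≤ j → Mx ≤ (j : ℝ) ^ δ := by
    intro j hj
    have hjr : (J₀ : ℝ) ≤ (j : ℝ) := by exact_mod_cast hj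
    calc Mx = (Mx ^ δ⁻¹) ^ δ := (Real.rpow_inv_rpow (by linarith) hδ0.ne').symm
    _ ≤ (j : ℝ) ^ δ := Real.rpow_le_rpow (Real.rpow_nonneg (by linarith) _)
        (le_trans hJ₀Mx hjr) hδ0.le
  -- the bad events
  set p : ℕ → Ω → Prop := fun j ω => ∃ n w v : ℕ,
    ((j : ℝ) ^ δ ≤ (n : ℝ) ∧ w < b ^ j ∧ v < b ^ n) ∧
      Z j w n v ω < (n : ℝ) ^ (-θ) with hp_def
  set r : ℝ≥0∞ := ENNReal.ofReal (Real.exp (-1)) with hr_def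
  have hr1 : r < 1 := by
    rw [hr_def, ENNReal.ofReal_lt_one, Real.exp_lt_one_iff]; norm_num
  set D : ℝ≥0∞ := (1 - r)⁻¹ with hD_def
  have hD : D ≠ ∞ := by
    rw [hD_def, ENNReal.inv_ne_top]
    intro h
    exact absurd (tsub_eq_zero_iff_le.mp h) (not_le.mpr hr1)
  have hcastb : ∀ m : ℕ, ((b : ℝ≥0∞)) ^ m = ENNReal.ofReal ((b : ℝ) ^ m) := fun m => by
    rw [ENNReal.ofReal_pow hb0.le, ENNReal.ofReal_natCast]
  -- the key real inequality
  have real_key : ∀ j n : ℕ, J₀ ≤ j → (j : ℝ) ^ δ ≤ (n : ℝ) →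
      (b : ℝ) ^ j * (b : ℝ) ^ n * Real.exp (-C * (n : ℝ) ^ α) ≤
        Real.exp (-(j : ℝ)) * Real.exp (-(n : ℝ)) := by
    intro j n hj hn
    have hjr : (J₀ : ℝ) ≤ (j : ℝ) := by exact_mod_cast hj
    have hj1 : (1 : ℝ) ≤ (j : ℝ) := le_trans hJ₀1 hjr
    have hMxn : Mx ≤ (n : ℝ) := le_trans (hjδMx j hj) hn
    have hn1 : (1 : ℝ) ≤ (n : ℝ) := le_trans hMx1 hMxn
    have hn0 : (0 : ℝ) < (n : ℝ) := by linarith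
    have hj0 : (0 : ℝ) < (j : ℝ) := by linarith
    -- fact 1 : 2 L n ≤ C n^α
    have f1 : 2 * L * (n : ℝ) ≤ C * (n : ℝ) ^ α := by
      have h1 : 2 * L ≤ C * (n : ℝ) ^ (α - 1) :=
        hR₁ _ (le_trans (le_max_right R₀ R₁) hMxn)
      have h2 := mul_le_mul_of_nonneg_right h1 hn0.le
      calc 2 * L * (n : ℝ) ≤ C * (n : ℝ) ^ (α - 1) * (n : ℝ) := h2
      _ = C * (n : ℝ) ^ α := by
          rw [mul_assoc, ← Real.rpow_add_one hn0.ne' (α - 1), sub_add_cancel]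
    -- fact 2 : 2 L j ≤ C n^α
    have f2 : 2 * L * (j : ℝ) ≤ C * (n : ℝ) ^ α := by
      have h1 : 2 * L ≤ C * (j : ℝ) ^ (δ * α - 1) := hR₂ _ (le_trans hJ₀R₂ hjr)
      have h2 := mul_le_mul_of_nonneg_right h1 hj0.le
      have h3 : C * (j : ℝ) ^ (δ * α - 1) * (j : ℝ) = C * (j : ℝ) ^ (δ * α) := by
        rw [mul_assoc, ← Real.rpow_add_one hj0.ne' (δ * α - 1), sub_add_cancel]
      have h4 : (j : ℝ) ^ (δ * α) ≤ (n : ℝ) ^ α := by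
        rw [Real.rpow_mul hj0.le]
        exact Real.rpow_le_rpow (Real.rpow_nonneg hj0.le _) hn hα0.le
      calc 2 * L * (j : ℝ) ≤ C * (j : ℝ) ^ (δ * α) := by rw [← h3]; exact h2
      _ ≤ C * (n : ℝ) ^ α := mul_le_mul_of_nonneg_left h4 hC.le
    have hsum : L * ((n : ℝ) + (j : ℝ)) ≤ C * (n : ℝ) ^ α := by linarith
    have hbj : (b : ℝ) ^ j = Real.exp ((j : ℝ) * Real.log b) := by
      rw [Real.exp_nat_mul, Real.exp_log hb0]
    have hbn : (b : ℝ) ^ n = Real.exp ((n : ℝ) * Real.log b) := by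
      rw [Real.exp_nat_mul, Real.exp_log hb0]
    rw [hbj, hbn, ← Real.exp_add, ← Real.exp_add, ← Real.exp_add, Real.exp_le_exp]
    have : L * ((n : ℝ) + (j : ℝ)) =
        (n : ℝ) * Real.log b + (j : ℝ) * Real.log b + (n : ℝ) + (j : ℝ) := by
      rw [hL_def]; ring
    nlinarith [hsum]
  -- per-j bound for j ≥ J₀
  have key : ∀ j : ℕ, J₀ ≤ j →
      P {ω | p j ω} ≤ ENNReal.ofReal (Real.exp (-(j : ℝ))) * D := by
    intro j hj
    have hjr : (J₀ : ℝ) ≤ (j : ℝ) := by exact_mod_cast hj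
    have hj1 : (1 : ℝ) ≤ (j : ℝ) := le_trans hJ₀1 hjr
    have hj1n : 1 ≤ j := by exact_mod_cast hj1
    -- covering by elementary events
    have hcover : {ω | p j ω} ⊆ ⋃ (n : ℕ) (w : ℕ) (v : ℕ),
        (if ((j : ℝ) ^ δ ≤ (n : ℝ) ∧ w < b ^ j ∧ v < b ^ n) then
          {ω | Z j w n v ω ≤ (n : ℝ) ^ (-θ)} else ∅) := by
      rintro ω ⟨n, w, v, hcond, hlt⟩
      refine Set.mem_iUnion.mpr ⟨n, Set.mem_iUnion.mpr ⟨w, Set.mem_iUnion.mpr ⟨v, ?_⟩⟩⟩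
      rw [if_pos hcond]
      exact le_of_lt hlt
    -- bound each elementary event
    have hterm : ∀ n w v : ℕ,
        P (if ((j : ℝ) ^ δ ≤ (n : ℝ) ∧ w < b ^ j ∧ v < b ^ n) then
          {ω | Z j w n v ω ≤ (n : ℝ) ^ (-θ)} else ∅) ≤
        (if v < b ^ n then (if w < b ^ j then
          (if (j : ℝ) ^ δ ≤ (n : ℝ) then
            ENNReal.ofReal (Real.exp (-C * (n : ℝ) ^ α)) else 0) else 0) else 0) := by
      intro n w v
      by_cases hcond : (j : ℝ) ^ δ ≤ (n : ℝ) ∧ w < b ^ j ∧ v < b ^ n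
      · obtain ⟨hn, hw, hv⟩ := hcond
        rw [if_pos ⟨hn, hw, hv⟩, if_pos hv, if_pos hw, if_pos hn]
        have hMxn : Mx ≤ (n : ℝ) := le_trans (hjδMx j hj) hn
        have hn1 : (1 : ℝ) ≤ (n : ℝ) := le_trans hMx1 hMxn
        have hn0 : (0 : ℝ) < (n : ℝ) := by linarith
        have hn1n : 1 ≤ n := by exact_mod_cast hn1
        have hx : (n : ℝ) ^ (-θ) ∈ Set.Ioc (0 : ℝ) x₀ := by
          constructor
          · exact Real.rpow_pos_of_pos hn0 _
          · exact hR₀ _ (le_trans (le_max_left R₀ R₁) hMxn)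
        have htl := htail j w n v hj1n hw hn1n hv _ hx
        have hexp : ((n : ℝ) ^ (-θ)) ^ (-(γ / (1 - γ))) = (n : ℝ) ^ α := by
          rw [← Real.rpow_mul hn0.le]
          congr 1
          rw [hα_def]; ring
        rwa [hexp] at htl
      · rw [if_neg hcond]
        simp only [measure_empty]
        exact zero_le
    -- sum them
    set c : ℕ → ℝ≥0∞ := fun n => ENNReal.ofReal (Real.exp (-C * (n : ℝ) ^ α)) with hc_def
    calc P {ω | p j ω}
        ≤ P (⋃ (n : ℕ) (w : ℕ) (v : ℕ),
            (if ((j : ℝ) ^ δ ≤ (n : ℝ) ∧ w < b ^ j ∧ v < b ^ n) then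
              {ω | Z j w n v ω ≤ (n : ℝ) ^ (-θ)} else ∅)) := measure_mono hcover
      _ ≤ ∑' (n : ℕ), ∑' (w : ℕ), ∑' (v : ℕ),
            P (if ((j : ℝ) ^ δ ≤ (n : ℝ) ∧ w < b ^ j ∧ v < b ^ n) then
              {ω | Z j w n v ω ≤ (n : ℝ) ^ (-θ)} else ∅) := by
          refine le_trans (measure_iUnion_le _) (ENNReal.tsum_le_tsum fun n => ?_)
          refine le_trans (measure_iUnion_le _) (ENNReal.tsum_le_tsum fun w => ?_)
          exact measure_iUnion_le _
      _ ≤ ∑' (n : ℕ), ∑' (w : ℕ), ∑' (v : ℕ),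
            (if v < b ^ n then (if w < b ^ j then
              (if (j : ℝ) ^ δ ≤ (n : ℝ) then c n else 0) else 0) else 0) := by
          refine ENNReal.tsum_le_tsum fun n => ENNReal.tsum_le_tsum fun w =>
            ENNReal.tsum_le_tsum fun v => hterm n w v
      _ = ∑' (n : ℕ), (b ^ n : ℝ≥0∞) * (b ^ j : ℝ≥0∞) *
            (if (j : ℝ) ^ δ ≤ (n : ℝ) then c n else 0) := by
          congr 1; funext n
          rw [tsum_congr (fun w => aux_tsum_ite (b ^ n) _)]
          rw [ENNReal.tsum_mul_left, aux_tsum_ite (b ^ j)]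
          push_cast
          ring
      _ ≤ ∑' (n : ℕ), ENNReal.ofReal (Real.exp (-(j : ℝ))) * r ^ n := by
          refine ENNReal.tsum_le_tsum fun n => ?_
          by_cases hn : (j : ℝ) ^ δ ≤ (n : ℝ)
          · rw [if_pos hn]
            have hrn : r ^ n = ENNReal.ofReal (Real.exp (-(n : ℝ))) := by
              rw [hr_def, ← ENNReal.ofReal_pow (Real.exp_nonneg _),
                ← Real.exp_nat_mul]
              norm_num
            rw [hrn, ← ENNReal.ofReal_mul (Real.exp_nonneg _)]
            have hb' : (b ^ n : ℝ≥0∞) * (b ^ j : ℝ≥0∞) * c n =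
                ENNReal.ofReal ((b : ℝ) ^ n * (b : ℝ) ^ j *
                  Real.exp (-C * (n : ℝ) ^ α)) := by
              rw [ENNReal.ofReal_mul (by positivity), ENNReal.ofReal_mul (by positivity),
                ← hcastb n, ← hcastb j]
            rw [hb']
            refine ENNReal.ofReal_le_ofReal ?_
            have := real_key j n hj hn
            calc (b : ℝ) ^ n * (b : ℝ) ^ j * Real.exp (-C * (n : ℝ) ^ α)
                = (b : ℝ) ^ j * (b : ℝ) ^ n * Real.exp (-C * (n : ℝ) ^ α) := by ring
              _ ≤ Real.exp (-(j : ℝ)) * Real.exp (-(n : ℝ)) := this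
          · rw [if_neg hn, mul_zero]
            exact zero_le
      _ = ENNReal.ofReal (Real.exp (-(j : ℝ))) * D := by
          rw [ENNReal.tsum_mul_left, ENNReal.tsum_geometric, hD_def]
  -- summability
  have hr0 : r ≠ 0 := (ENNReal.ofReal_pos.mpr (Real.exp_pos _)).ne'
  have hrtop : r ≠ ∞ := ENNReal.ofReal_ne_top
  have hrpow : ∀ m : ℕ, ENNReal.ofReal (Real.exp (-(m : ℝ))) = r ^ m := by
    intro m
    rw [hr_def, ← ENNReal.ofReal_pow (Real.exp_nonneg _), ← Real.exp_nat_mul]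
    norm_num
  set E : ℝ≥0∞ := D + (r⁻¹) ^ J₀ with hE_def
  have hEtop : E ≠ ∞ :=
    ENNReal.add_ne_top.mpr ⟨hD, ENNReal.pow_ne_top (ENNReal.inv_ne_top.mpr hr0)⟩
  have huni : ∀ j : ℕ, P {ω | p j ω} ≤ E * r ^ j := by
    intro j
    rcases le_or_gt J₀ j with hj | hj
    · calc P {ω | p j ω} ≤ ENNReal.ofReal (Real.exp (-(j : ℝ))) * D := key j hj
      _ = D * r ^ j := by rw [hrpow j, mul_comm]
      _ ≤ E * r ^ j := mul_le_mul_left (by rw [hE_def]; exact le_self_add) _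
    · have h1 : P {ω | p j ω} ≤ 1 := prob_le_one
      have h2 : (1 : ℝ≥0∞) ≤ (r⁻¹) ^ J₀ * r ^ j := by
        have hle : r ^ J₀ ≤ r ^ j :=
          pow_le_pow_right_of_le_one' hr1.le hj.le
        have hinv : (r ^ j)⁻¹ ≤ (r ^ J₀)⁻¹ := ENNReal.inv_le_inv.mpr hle
        calc (1 : ℝ≥0∞) = (r ^ j)⁻¹ * r ^ j :=
              (ENNReal.inv_mul_cancel (pow_ne_zero _ hr0) (ENNReal.pow_ne_top hrtop)).symm
        _ ≤ (r ^ J₀)⁻¹ * r ^ j := mul_le_mul_left hinv _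
        _ = (r⁻¹) ^ J₀ * r ^ j := by rw [ENNReal.inv_pow]
      calc P {ω | p j ω} ≤ 1 := h1
      _ ≤ (r⁻¹) ^ J₀ * r ^ j := h2
      _ ≤ E * r ^ j := mul_le_mul_left (by rw [hE_def]; exact le_add_self) _
  have hsum : (∑' j, P {ω | p j ω}) ≠ ∞ := by
    refine ne_top_of_le_ne_top ?_ (ENNReal.tsum_le_tsum huni)
    rw [ENNReal.tsum_mul_left, ENNReal.tsum_geometric]
    exact ENNReal.mul_ne_top hEtop hD
  -- Borel-Cantelli
  have h0 := measure_setOf_frequently_eq_zero (μ := P) hsum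
  have hae : ∀ᵐ ω ∂P, ¬ ∃ᶠ j in Filter.atTop, p j ω := by
    rw [ae_iff]
    simpa only [not_not] using h0
  filter_upwards [hae] with ω hω
  rw [Filter.not_frequently] at hω
  rw [Filter.eventually_atTop] at hω
  obtain ⟨J, hJ⟩ := hω
  refine ⟨J, fun j hj n hn w hw v hv => ?_⟩
  by_contra hlt
  push_neg at hlt
  exact hJ j hj ⟨n, w, v, ⟨hn, hw, hv⟩, hlt⟩
end

section
/- (Kolmogorov chaining.) Let α ∈ (0,1], N a nonnegative integer, and let f : [u,v] → ℝ be a continuous function on a compact interval [u,v] whose endpoints are dyadic rationals. Suppose that for every integer n ≥ N and every pair of dyadic rationals q, q' ∈ [u,v] of generation n with |q − q'| = 2^{−n}, one has |f(q) − f(q')| ≤ 2^{−nα}. Then there exists a constant C depending only on α (not on f, N, u, v) such that |f(q) − f(q')| ≤ C|q − q'|^α for all q, q' ∈ [u,v] with |q − q'| ≤ 2^{−N}. -/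
/-- Smallest generation-`j` dyadic `≥ q`. -/
noncomputable def dceil (q : ℝ) (j : ℕ) : ℝ := (⌈2 ^ j * q⌉ : ℤ) / 2 ^ j

lemma dceil_ge (q : ℝ) (j : ℕ) : q ≤ dceil q j := by
  have h2 : (0:ℝ) < 2 ^ j := by positivity
  rw [dceil, le_div_iff₀ h2, mul_comm]
  exact Int.le_ceil _

lemma dceil_lt (q : ℝ) (j : ℕ) : dceil q j < q + 1 / 2 ^ j := by
  have h2 : (0:ℝ) < 2 ^ j := by positivity
  rw [dceil, div_lt_iff₀ h2, add_mul, div_mul_cancel₀ _ (ne_of_gt h2), mul_comm]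
  exact Int.ceil_lt_add_one _

lemma dceil_int (q : ℝ) (j : ℕ) : ⌈2 ^ (j+1) * q⌉ = 2 * ⌈2 ^ j * q⌉ ∨
    ⌈2 ^ (j+1) * q⌉ = 2 * ⌈2 ^ j * q⌉ - 1 := by
  have h1 : ⌈2 ^ (j+1) * q⌉ ≤ 2 * ⌈2 ^ j * q⌉ := by
    apply Int.ceil_le.mpr
    push_cast
    rw [pow_succ, mul_comm ((2:ℝ)^j) 2, mul_assoc]
    have := Int.le_ceil (2 ^ j * q)
    linarith
  have h2 : 2 * ⌈2 ^ j * q⌉ - 1 ≤ ⌈2 ^ (j+1) * q⌉ := by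
    have hx : (2:ℝ) * ⌈2 ^ j * q⌉ - 2 < 2 ^ (j+1) * q := by
      have := Int.ceil_lt_add_one (2 ^ j * q)
      rw [pow_succ, mul_comm ((2:ℝ)^j) 2, mul_assoc]
      linarith
    have hy : ((2 * ⌈2 ^ j * q⌉ - 2 : ℤ) : ℝ) < ⌈2 ^ (j+1) * q⌉ :=
      lt_of_lt_of_le (by push_cast; linarith [hx]) (Int.le_ceil _)
    have : (2 * ⌈2 ^ j * q⌉ - 2 : ℤ) < ⌈2 ^ (j+1) * q⌉ := by exact_mod_cast hy
    omega
  omega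

lemma dceil_step (q : ℝ) (j : ℕ) : dceil q j - dceil q (j+1) = 0 ∨
    dceil q j - dceil q (j+1) = 1 / 2 ^ (j+1) := by
  have h2 : ((2:ℝ) ^ (j+1)) ≠ 0 := by positivity
  have hrw : dceil q j = ((2 * ⌈2 ^ j * q⌉ : ℤ) : ℝ) / 2 ^ (j+1) := by
    rw [dceil]; push_cast; rw [pow_succ]; field_simp
  rcases dceil_int q j with h | h
  · left; rw [hrw, dceil, h]; push_cast; ring
  · right; rw [hrw, dceil, h]; push_cast; field_simp; ring

lemma dceil_succ_le (q : ℝ) (j : ℕ) : dceil q (j+1) ≤ dceil q j := by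
  rcases dceil_step q j with h | h
  · linarith
  · have : (0:ℝ) < 1 / 2 ^ (j+1) := by positivity
    linarith

lemma dceil_tendsto (q : ℝ) : Filter.Tendsto (dceil q) Filter.atTop (nhds q) := by
  have h1 : Filter.Tendsto (fun j : ℕ => q + 1 / 2 ^ j) Filter.atTop (nhds (q + 0)) := by
    apply Filter.Tendsto.const_add
    simpa [one_div] using tendsto_pow_atTop_nhds_zero_of_lt_one
      (by norm_num : (0:ℝ) ≤ (2:ℝ)⁻¹) (by norm_num) |>.comp Filter.tendsto_id
  rw [add_zero] at h1
  exact tendsto_of_tendsto_of_tendsto_of_le_of_le tendsto_const_nhds h1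
    (fun j => dceil_ge q j) (fun j => le_of_lt (dceil_lt q j))

def DHyp (N : ℕ) (u v r : ℝ) (f : ℝ → ℝ) : Prop :=
  ∀ n : ℕ, N ≤ n → ∀ q q' : ℝ, q ∈ Set.Icc u v → q' ∈ Set.Icc u v →
    (∃ k : ℤ, q = (k : ℝ) / 2 ^ n) → (∃ k : ℤ, q' = (k : ℝ) / 2 ^ n) →
    |q - q'| = 1 / 2 ^ n → |f q - f q'| ≤ r ^ n

lemma KC_step' {N : ℕ} {u v r : ℝ} {f : ℝ → ℝ} (H : DHyp N u v r f) (hr0 : 0 < r)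
    {n : ℕ} (hn : N ≤ n) {a b : ℝ} (ha : a ∈ Set.Icc u v) (hb : b ∈ Set.Icc u v)
    (ka kb : ℤ) (hka : a = (ka : ℝ) / 2 ^ n) (hkb : b = (kb : ℝ) / 2 ^ n)
    (hab : a ≤ b) (hd : b - a ≤ 2 / 2 ^ n) : |f a - f b| ≤ 2 * r ^ n := by
  have h2n : (0:ℝ) < 2 ^ n := by positivity
  have hrn : (0:ℝ) < r ^ n := by positivity
  have hk : ka ≤ kb := by
    have : (ka:ℝ) ≤ kb := by
      rw [hka, hkb] at hab; exact (div_le_div_iff_of_pos_right h2n).mp hab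
    exact_mod_cast this
  have hk2 : kb ≤ ka + 2 := by
    have h : (kb:ℝ)/2^n ≤ ((ka:ℝ)+2)/2^n := by
      rw [hka, hkb] at hd; rw [add_div]; linarith
    have : (kb:ℝ) ≤ (ka:ℝ) + 2 := (div_le_div_iff_of_pos_right h2n).mp h
    exact_mod_cast this
  obtain ⟨c, hcle, rfl⟩ : ∃ c : ℕ, c ≤ 2 ∧ kb = ka + c := ⟨(kb - ka).toNat, by omega, by omega⟩
  interval_cases c
  · rw [hka, hkb]; simp; positivity
  · have := H n hn a b ha hb ⟨ka, hka⟩ ⟨ka+1, hkb⟩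
      (by rw [hka, hkb, abs_sub_comm, abs_of_nonneg (by linarith)]; push_cast; ring)
    linarith
  · set c : ℝ := ((ka : ℝ) + 1) / 2 ^ n with hc
    have hac : a ≤ c := by
      rw [hka, hc]; exact (div_le_div_iff_of_pos_right h2n).mpr (by linarith)
    have hcb : c ≤ b := by
      rw [hkb, hc]; exact (div_le_div_iff_of_pos_right h2n).mpr (by push_cast; linarith)
    have hcm : c ∈ Set.Icc u v := ⟨le_trans ha.1 hac, le_trans hcb hb.2⟩
    have h1 := H n hn a c ha hcm ⟨ka, hka⟩ ⟨ka + 1, by rw [hc]; push_cast; ring⟩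
      (by rw [hka, hc, abs_sub_comm, abs_of_nonneg (by linarith)]; push_cast; ring)
    have h2 := H n hn c b hcm hb ⟨ka + 1, by rw [hc]; push_cast; ring⟩
      ⟨ka + 2, by rw [hkb]; push_cast; ring⟩
      (by rw [hkb, hc, abs_sub_comm, abs_of_nonneg (by linarith)]; push_cast; ring)
    calc |f a - f b| ≤ |f a - f c| + |f c - f b| := abs_sub_le _ _ _
      _ ≤ 2 * r ^ n := by linarith

lemma dceil_rep (q : ℝ) (j : ℕ) : dceil q j = ((2 * ⌈2 ^ j * q⌉ : ℤ) : ℝ) / 2 ^ (j+1) := by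
  rw [dceil]; push_cast; rw [pow_succ]; field_simp

lemma KC_chain {N : ℕ} {u v r : ℝ} {f : ℝ → ℝ} (H : DHyp N u v r f) (hr0 : 0 < r) (hr1 : r < 1)
    {m : ℕ} (hm : N ≤ m) {q : ℝ} (hq : u ≤ q) (hv : dceil q m ≤ v) :
    ∀ j, m ≤ j → dceil q j ≤ dceil q m ∧
      |f (dceil q j) - f (dceil q m)| ≤ (r ^ (m+1) - r ^ (j+1)) / (1 - r) := by
  intro j hj
  induction j, hj using Nat.le_induction with
  | base => exact ⟨le_refl _, by simp⟩
  | succ j hj ih =>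
    obtain ⟨ih1, ih2⟩ := ih
    have hle : dceil q (j+1) ≤ dceil q m := le_trans (dceil_succ_le q j) ih1
    have hj1 : dceil q j ∈ Set.Icc u v := ⟨le_trans hq (dceil_ge q j), le_trans ih1 hv⟩
    have hj2 : dceil q (j+1) ∈ Set.Icc u v := ⟨le_trans hq (dceil_ge q (j+1)), le_trans hle hv⟩
    have h1r : (0:ℝ) < 1 - r := by linarith
    have hstep : |f (dceil q (j+1)) - f (dceil q j)| ≤ r ^ (j+1) := by
      rcases dceil_step q j with h | h
      · have heq : dceil q (j+1) = dceil q j := by linarith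
        rw [heq, sub_self, abs_zero]; positivity
      · exact H (j+1) (by omega) _ _ hj2 hj1
          ⟨⌈2 ^ (j+1) * q⌉, rfl⟩
          ⟨2 * ⌈2 ^ j * q⌉, dceil_rep q j⟩
          (by rw [abs_sub_comm, h, abs_of_pos (by positivity)])
    refine ⟨hle, ?_⟩
    calc |f (dceil q (j+1)) - f (dceil q m)|
        ≤ |f (dceil q (j+1)) - f (dceil q j)| + |f (dceil q j) - f (dceil q m)| :=
          abs_sub_le _ _ _
      _ ≤ r ^ (j+1) + (r ^ (m+1) - r ^ (j+1)) / (1 - r) := by linarith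
      _ = (r ^ (m+1) - r ^ (j+1+1)) / (1 - r) := by field_simp; ring

lemma KC_limit {N : ℕ} {u v r : ℝ} {f : ℝ → ℝ} (H : DHyp N u v r f) (hr0 : 0 < r) (hr1 : r < 1)
    (hf : ContinuousOn f (Set.Icc u v))
    {m : ℕ} (hm : N ≤ m) {q : ℝ} (hq : q ∈ Set.Icc u v) (hv : dceil q m ≤ v) :
    |f q - f (dceil q m)| ≤ r ^ (m+1) / (1 - r) := by
  have h1r : (0:ℝ) < 1 - r := by linarith
  have hmem : ∀ j, m ≤ j → dceil q j ∈ Set.Icc u v := fun j hj =>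
    ⟨le_trans hq.1 (dceil_ge q j), le_trans (KC_chain H hr0 hr1 hm hq.1 hv j hj).1 hv⟩
  have htend : Filter.Tendsto (fun j => f (dceil q j)) Filter.atTop (nhds (f q)) := by
    have hc : ContinuousWithinAt f (Set.Icc u v) q := hf q hq
    apply hc.tendsto.comp
    rw [tendsto_nhdsWithin_iff]
    exact ⟨dceil_tendsto q, Filter.eventually_atTop.mpr ⟨m, hmem⟩⟩
  have hb : ∀ j, m ≤ j → |f (dceil q j) - f (dceil q m)| ≤ r ^ (m+1) / (1 - r) := by
    intro j hj
    refine le_trans (KC_chain H hr0 hr1 hm hq.1 hv j hj).2 ?_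
    have hp : (0:ℝ) < r ^ (j+1) := by positivity
    gcongr
    linarith
  have habs : Filter.Tendsto (fun j => |f (dceil q j) - f (dceil q m)|) Filter.atTop
      (nhds (|f q - f (dceil q m)|)) := (htend.sub tendsto_const_nhds).abs
  exact le_of_tendsto habs (Filter.eventually_atTop.mpr ⟨m, hb⟩)

/-- Largest generation-`j` dyadic `≤ q`. -/
noncomputable def dfloor (q : ℝ) (j : ℕ) : ℝ := (⌊2 ^ j * q⌋ : ℤ) / 2 ^ j

lemma dfloor_le (q : ℝ) (j : ℕ) : dfloor q j ≤ q := by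
  have h2 : (0:ℝ) < 2 ^ j := by positivity
  rw [dfloor, div_le_iff₀ h2, mul_comm]
  exact Int.floor_le _

lemma dfloor_gt (q : ℝ) (j : ℕ) : q - 1 / 2 ^ j < dfloor q j := by
  have h2 : (0:ℝ) < 2 ^ j := by positivity
  rw [dfloor, lt_div_iff₀ h2, sub_mul, div_mul_cancel₀ _ (ne_of_gt h2), mul_comm]
  linarith [Int.sub_one_lt_floor (2 ^ j * q)]

lemma dceil_neg (q : ℝ) (j : ℕ) : dceil (-q) j = - dfloor q j := by
  rw [dceil, dfloor, show (2:ℝ) ^ j * (-q) = -(2 ^ j * q) by ring, Int.ceil_neg]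
  push_cast; ring

lemma KC_neg {N : ℕ} {u v r : ℝ} {f : ℝ → ℝ} (H : DHyp N u v r f) :
    DHyp N (-v) (-u) r (fun x => f (-x)) := by
  intro n hn q q' hq hq' hk hk'
  obtain ⟨k, hkk⟩ := hk
  obtain ⟨k', hkk'⟩ := hk'
  intro habs
  have h1 : -q ∈ Set.Icc u v := by constructor <;> [linarith [hq.2]; linarith [hq.1]]
  have h2 : -q' ∈ Set.Icc u v := by constructor <;> [linarith [hq'.2]; linarith [hq'.1]]
  have := H n hn (-q) (-q') h1 h2 ⟨-k, by push_cast; rw [hkk]; ring⟩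
    ⟨-k', by push_cast; rw [hkk']; ring⟩
    (by rw [← habs, abs_sub_comm]; congr 1; ring)
  simpa using this

lemma KC_limit_floor {N : ℕ} {u v r : ℝ} {f : ℝ → ℝ} (H : DHyp N u v r f)
    (hr0 : 0 < r) (hr1 : r < 1) (hf : ContinuousOn f (Set.Icc u v))
    {m : ℕ} (hm : N ≤ m) {q : ℝ} (hq : q ∈ Set.Icc u v) (hv : u ≤ dfloor q m) :
    |f q - f (dfloor q m)| ≤ r ^ (m+1) / (1 - r) := by
  have hg : ContinuousOn (fun x => f (-x)) (Set.Icc (-v) (-u)) := by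
    apply hf.comp continuous_neg.continuousOn
    intro x hx
    simp only [Set.mem_Icc] at hx ⊢
    constructor <;> linarith
  have hq' : -q ∈ Set.Icc (-v) (-u) := by
    constructor <;> [linarith [hq.2]; linarith [hq.1]]
  have hv' : dceil (-q) m ≤ -u := by rw [dceil_neg]; linarith
  have := KC_limit (KC_neg H) hr0 hr1 hg hm hq' hv'
  rw [dceil_neg] at this
  simpa using this

lemma KC_rpow (α : ℝ) (m : ℕ) :
    ((1 / 2 : ℝ) ^ α) ^ m = ((1 / 2 : ℝ) ^ m : ℝ) ^ α := by
  rw [← Real.rpow_natCast ((1/2:ℝ) ^ α) m, ← Real.rpow_natCast (1/2:ℝ) m,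
    ← Real.rpow_mul (by norm_num), ← Real.rpow_mul (by norm_num), mul_comm]

/-- Kolmogorov chaining: if a continuous function on a compact interval with dyadic endpoints
has increments at most `2^{-nα}` between adjacent dyadic points of every generation `n ≥ N`,
then it is `α`-Hölder with a constant `C` depending only on `α`, at scales `≤ 2^{-N}`. -/
theorem kolmogorov_chaining (α : ℝ) (hα : α ∈ Set.Ioc (0:ℝ) 1) :
    ∃ C : ℝ, ∀ (N : ℕ) (u v : ℝ) (f : ℝ → ℝ),
      (∃ (n : ℕ) (k : ℤ), u = (k : ℝ) / 2 ^ n) →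
      (∃ (n : ℕ) (k : ℤ), v = (k : ℝ) / 2 ^ n) →
      u ≤ v → ContinuousOn f (Set.Icc u v) →
      (∀ n : ℕ, N ≤ n → ∀ q q' : ℝ, q ∈ Set.Icc u v → q' ∈ Set.Icc u v →
        (∃ k : ℤ, q = (k : ℝ) / 2 ^ n) → (∃ k : ℤ, q' = (k : ℝ) / 2 ^ n) →
        |q - q'| = 1 / 2 ^ n → |f q - f q'| ≤ ((1:ℝ) / 2 ^ n) ^ α) →
      ∀ q q' : ℝ, q ∈ Set.Icc u v → q' ∈ Set.Icc u v → |q - q'| ≤ 1 / 2 ^ N →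
        |f q - f q'| ≤ C * |q - q'| ^ α := by
  obtain ⟨hα0, hα1⟩ := hα
  set r : ℝ := (1/2 : ℝ) ^ α with hrdef
  have hr0 : 0 < r := Real.rpow_pos_of_pos (by norm_num) α
  have hr1 : r < 1 := Real.rpow_lt_one (by norm_num) (by norm_num) hα0
  have h1r : (0:ℝ) < 1 - r := by linarith
  refine ⟨4 / (1 - r), ?_⟩
  intro N u v f _ _ huv hf Hraw
  have H : DHyp N u v r f := by
    intro n hn q q' hq hq' hk hk' habs
    calc |f q - f q'| ≤ ((1:ℝ)/2^n) ^ α := Hraw n hn q q' hq hq' hk hk' habs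
      _ = r ^ n := by rw [hrdef, KC_rpow, one_div_pow]
  have key : ∀ q q' : ℝ, q ∈ Set.Icc u v → q' ∈ Set.Icc u v → q < q' → q' - q ≤ 1/2^N →
      |f q - f q'| ≤ 4/(1-r) * (q' - q) ^ α := by
    intro q q' hq hq' hlt hsmall
    have hd0 : (0:ℝ) < q' - q := by linarith
    have hex : ∃ n : ℕ, (1/2:ℝ)^n < q' - q := exists_pow_lt_of_lt_one hd0 (by norm_num)
    obtain ⟨n1, hfind, hmin⟩ : ∃ n1 : ℕ, (1/2:ℝ)^n1 < q' - q ∧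
        ∀ k < n1, ¬((1/2:ℝ)^k < q' - q) :=
      ⟨Nat.find hex, Nat.find_spec hex, fun k hk => Nat.find_min hex hk⟩
    have hNlt : N < n1 := by
      by_contra hcon
      push_neg at hcon
      have h1 : (1/2:ℝ)^N ≤ (1/2:ℝ)^n1 :=
        pow_le_pow_of_le_one (by norm_num) (by norm_num) hcon
      rw [one_div_pow] at h1
      linarith
    obtain ⟨n, rfl⟩ : ∃ n, n1 = n + 1 := ⟨n1 - 1, by omega⟩
    have hN : N ≤ n := by omega
    have hup : q' - q ≤ (1/2:ℝ)^n := not_lt.mp (hmin n (by omega))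
    have hm : N ≤ n + 1 := by omega
    have h2m : (0:ℝ) < 2 ^ (n+1) := by positivity
    have hhalf : (1/2:ℝ)^(n+1) = 1/2^(n+1) := one_div_pow 2 (n+1)
    have hsq : q ≤ dceil q (n+1) := dceil_ge q (n+1)
    have hsq' : dceil q (n+1) ≤ q' := by
      have h := dceil_lt q (n+1)
      rw [← hhalf] at h
      linarith
    have htq' : dfloor q' (n+1) ≤ q' := dfloor_le q' (n+1)
    have htq : q ≤ dfloor q' (n+1) := by
      have h := dfloor_gt q' (n+1)
      rw [← hhalf] at h
      linarith
    have hsmem : dceil q (n+1) ∈ Set.Icc u v := ⟨le_trans hq.1 hsq, le_trans hsq' hq'.2⟩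
    have htmem : dfloor q' (n+1) ∈ Set.Icc u v := ⟨le_trans hq.1 htq, le_trans htq' hq'.2⟩
    have h1 : |f q - f (dceil q (n+1))| ≤ r^(n+2)/(1-r) :=
      KC_limit H hr0 hr1 hf hm hq hsmem.2
    have h2 : |f q' - f (dfloor q' (n+1))| ≤ r^(n+2)/(1-r) :=
      KC_limit_floor H hr0 hr1 hf hm hq' htmem.1
    have h2n2 : (2:ℝ)/2^(n+1) = (1/2:ℝ)^n := by
      rw [one_div_pow, pow_succ]
      have : (2:ℝ)^n ≠ 0 := by positivity
      field_simp
    have h3 : |f (dceil q (n+1)) - f (dfloor q' (n+1))| ≤ 2 * r^(n+1) := by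
      rcases le_total (dceil q (n+1)) (dfloor q' (n+1)) with hst | hst
      · exact KC_step' H hr0 hm hsmem htmem _ _ rfl rfl hst (by rw [h2n2]; linarith)
      · rw [abs_sub_comm]
        exact KC_step' H hr0 hm htmem hsmem _ _ rfl rfl hst (by rw [h2n2]; linarith)
    have hrm : r^(n+1) ≤ (q' - q) ^ α := by
      rw [hrdef, KC_rpow]
      exact Real.rpow_le_rpow (by positivity) (le_of_lt hfind) (le_of_lt hα0)
    have T1 := abs_sub_le (f q) (f (dceil q (n+1))) (f q')
    have T2 := abs_sub_le (f (dceil q (n+1))) (f (dfloor q' (n+1))) (f q')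
    have A := abs_sub_comm (f (dfloor q' (n+1))) (f q')
    have hr_m1 : r^(n+2) ≤ r^(n+1) :=
      pow_le_pow_of_le_one (le_of_lt hr0) (le_of_lt hr1) (by omega)
    have e2 : r^(n+1) ≤ r^(n+1)/(1-r) := by
      rw [le_div_iff₀ h1r]
      nlinarith [pow_nonneg (le_of_lt hr0) (n+1)]
    have e3 : r^(n+1)/(1-r) ≤ (q' - q)^α/(1-r) := by gcongr
    have e1 : r^(n+2)/(1-r) ≤ r^(n+1)/(1-r) := by gcongr
    have : |f q - f q'| ≤ 4 * ((q' - q)^α/(1-r)) := by linarith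
    calc |f q - f q'| ≤ 4 * ((q' - q)^α/(1-r)) := this
      _ = 4/(1-r) * (q' - q)^α := by ring
  intro q q' hq hq' hsmall
  rcases lt_trichotomy q q' with h | h | h
  · have habs : |q - q'| = q' - q := by rw [abs_sub_comm, abs_of_nonneg (by linarith)]
    rw [habs]
    exact key q q' hq hq' h (by rw [habs] at hsmall; exact hsmall)
  · rw [h]
    simp [Real.zero_rpow (ne_of_gt hα0)]
  · have habs : |q - q'| = q - q' := abs_of_nonneg (by linarith)
    rw [habs, abs_sub_comm]
    exact key q' q hq' hq h (by rw [habs] at hsmall; exact hsmall)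
end

section
/- Fix an integer b ≥ 2. Let Z, Z_0, …, Z_{b−1} and W be random variables on a common probability space such that Z ≥ 0 and W > 0 almost surely, the variables Z_0, …, Z_{b−1} are independent and each has the same distribution as Z, the vector (Z_0,…,Z_{b−1}) is independent of W, and almost surely Z ≥ W ∑_{i=0}^{b−1} Z_i. Then the Laplace transform L(t) = E(exp(−tZ)) satisfies L(t) ≤ E(L(Wt)^b) for every t ≥ 0. -/
open MeasureTheory ProbabilityTheory

/-- If `Z ≥ 0`, `W > 0` a.s., the `Z_i` (`i < b`) are i.i.d. copies of `Z` independent of `W`,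
and a.s. `Z ≥ W ∑_i Z_i`, then the Laplace transform `L(t) = E(e^{-tZ})` satisfies
`L(t) ≤ E(L(W t)^b)` for all `t ≥ 0`. -/
theorem laplace_selfsimilar_inequality
    {Ω : Type*} [MeasurableSpace Ω] (P : Measure Ω) [IsProbabilityMeasure P]
    (b : ℕ) (hb : 2 ≤ b)
    (Z W : Ω → ℝ) (Zi : Fin b → Ω → ℝ)
    (hZmeas : Measurable Z) (hWmeas : Measurable W) (hZimeas : ∀ i, Measurable (Zi i))
    (hZnn : ∀ᵐ ω ∂P, 0 ≤ Z ω) (hWpos : ∀ᵐ ω ∂P, 0 < W ω)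
    (hindep : iIndepFun Zi P)
    (hid : ∀ i, Measure.map (Zi i) P = Measure.map Z P)
    (hindepW : IndepFun (fun ω => fun i : Fin b => Zi i ω) W P)
    (hdom : ∀ᵐ ω ∂P, W ω * ∑ i : Fin b, Zi i ω ≤ Z ω)
    (t : ℝ) (ht : 0 ≤ t) :
    ∫ ω, Real.exp (-t * Z ω) ∂P ≤
      ∫ ω, (∫ ω', Real.exp (-(W ω * t) * Z ω') ∂P) ^ b ∂P := by
  classical
  set S : Ω → ℝ := fun ω => ∑ i : Fin b, Zi i ω with hS
  have hSmeas : Measurable S := Finset.measurable_sum _ fun i _ => hZimeas i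
  -- each Zi is a.e. nonnegative
  have hZinn : ∀ i, ∀ᵐ ω ∂P, 0 ≤ Zi i ω := by
    intro i
    have h1 : ∀ᵐ x ∂(P.map Z), 0 ≤ x :=
      (MeasureTheory.ae_map_iff hZmeas.aemeasurable measurableSet_Ici).mpr hZnn
    rw [← hid i] at h1
    exact (MeasureTheory.ae_map_iff (hZimeas i).aemeasurable measurableSet_Ici).mp h1
  have hSnn : ∀ᵐ ω ∂P, 0 ≤ S ω := by
    have := (MeasureTheory.ae_all_iff).mpr hZinn
    filter_upwards [this] with ω hω
    exact Finset.sum_nonneg fun i _ => hω i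
  -- monotone step
  have hint1 : Integrable (fun ω => Real.exp (-t * Z ω)) P := by
    refine (integrable_const (1 : ℝ)).mono'
      ((hZmeas.const_mul (-t)).exp.aestronglyMeasurable) ?_
    filter_upwards [hZnn] with ω h
    rw [Real.norm_eq_abs, abs_of_pos (Real.exp_pos _), Real.exp_le_one_iff]
    nlinarith
  have hint2 : Integrable (fun ω => Real.exp (-(W ω * t) * S ω)) P := by
    refine (integrable_const (1 : ℝ)).mono'
      (((hWmeas.mul_const t).neg.mul hSmeas).exp.aestronglyMeasurable) ?_
    filter_upwards [hWpos, hSnn] with ω hw hs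
    rw [Real.norm_eq_abs, abs_of_pos (Real.exp_pos _), Real.exp_le_one_iff]
    nlinarith [mul_nonneg (mul_nonneg hw.le ht) hs]
  have hstep1 : ∫ ω, Real.exp (-t * Z ω) ∂P ≤ ∫ ω, Real.exp (-(W ω * t) * S ω) ∂P := by
    refine integral_mono_ae hint1 hint2 ?_
    filter_upwards [hdom] with ω h
    apply Real.exp_le_exp.mpr
    nlinarith
  -- independence of S and W
  have hindepWS : IndepFun W S P := by
    have := hindepW.comp (φ := fun v : Fin b → ℝ => ∑ i, v i) (ψ := id)
      (Finset.measurable_sum _ fun i _ => measurable_pi_apply i) measurable_id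
    exact this.symm
  -- the key identity
  have hL : ∀ s : ℝ, ∫ x, Real.exp (-(s * t) * x) ∂(P.map S) =
      (∫ ω', Real.exp (-(s * t) * Z ω') ∂P) ^ b := by
    intro s
    rw [integral_map (f := fun x : ℝ => Real.exp (-(s * t) * x)) hSmeas.aemeasurable
      (by exact ((measurable_id.const_mul (-(s * t))).exp).aestronglyMeasurable : AEStronglyMeasurable (fun x : ℝ => Real.exp (-(s * t) * x)) _)]
    have hsum : (fun ω => Real.exp (-(s * t) * S ω)) =
        fun ω => Real.exp (-(s * t) * (∑ i : Fin b, Zi i) ω) := by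
      funext ω; simp [hS, Finset.sum_apply]
    calc ∫ ω, Real.exp (-(s * t) * S ω) ∂P
        = mgf (∑ i : Fin b, Zi i) P (-(s * t)) := by
          rw [mgf]; rw [hsum]
      _ = ∏ i : Fin b, mgf (Zi i) P (-(s * t)) := hindep.mgf_sum hZimeas Finset.univ
      _ = ∏ _i : Fin b, mgf Z P (-(s * t)) := by
          refine Finset.prod_congr rfl fun i _ => ?_
          unfold mgf
          rw [← integral_map (f := fun x : ℝ => Real.exp (-(s * t) * x))
              (hZimeas i).aemeasurable
              (by exact ((measurable_id.const_mul (-(s * t))).exp).aestronglyMeasurable : AEStronglyMeasurable (fun x : ℝ => Real.exp (-(s * t) * x)) _),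
            hid i,
            integral_map (f := fun x : ℝ => Real.exp (-(s * t) * x)) hZmeas.aemeasurable
              (by exact ((measurable_id.const_mul (-(s * t))).exp).aestronglyMeasurable : AEStronglyMeasurable (fun x : ℝ => Real.exp (-(s * t) * x)) _)]
      _ = (mgf Z P (-(s * t))) ^ b := by simp
      _ = (∫ ω', Real.exp (-(s * t) * Z ω') ∂P) ^ b := rfl
  -- rewrite via the product measure
  set f : ℝ × ℝ → ℝ := fun p => Real.exp (-(p.1 * t) * p.2) with hf
  have hfmeas : Measurable f := by
    apply Measurable.exp
    exact ((measurable_fst.mul_const t).neg.mul measurable_snd)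
  haveI : IsProbabilityMeasure (P.map W) := Measure.isProbabilityMeasure_map hWmeas.aemeasurable
  haveI : IsProbabilityMeasure (P.map S) := Measure.isProbabilityMeasure_map hSmeas.aemeasurable
  have hWnn_map : ∀ᵐ x ∂(P.map W), 0 ≤ x :=
    (MeasureTheory.ae_map_iff hWmeas.aemeasurable measurableSet_Ici).mpr
      (hWpos.mono fun ω h => le_of_lt h)
  have hSnn_map : ∀ᵐ x ∂(P.map S), 0 ≤ x :=
    (MeasureTheory.ae_map_iff hSmeas.aemeasurable measurableSet_Ici).mpr hSnn
  have hfint : Integrable f ((P.map W).prod (P.map S)) := by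
    refine (integrable_const (1 : ℝ)).mono' hfmeas.aestronglyMeasurable ?_
    rw [MeasureTheory.Measure.ae_prod_iff_ae_ae]
    · filter_upwards [hWnn_map] with w hw
      filter_upwards [hSnn_map] with s hs
      rw [Real.norm_eq_abs, abs_of_pos (Real.exp_pos _), Real.exp_le_one_iff]
      simp only [hf]
      nlinarith [mul_nonneg (mul_nonneg hw ht) hs]
    · exact measurableSet_le (hfmeas.norm) measurable_const
  have hmap : P.map (fun ω => (W ω, S ω)) = (P.map W).prod (P.map S) :=
    (indepFun_iff_map_prod_eq_prod_map_map hWmeas.aemeasurable hSmeas.aemeasurable).mp hindepWS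
  have hstep2 : ∫ ω, Real.exp (-(W ω * t) * S ω) ∂P =
      ∫ ω, (∫ ω', Real.exp (-(W ω * t) * Z ω') ∂P) ^ b ∂P := by
    have hmeasg : StronglyMeasurable fun w : ℝ => ∫ ω', Real.exp (-(w * t) * Z ω') ∂P := by
      apply MeasureTheory.StronglyMeasurable.integral_prod_right
        (f := fun (w : ℝ) (ω' : Ω) => Real.exp (-(w * t) * Z ω'))
      exact (((measurable_fst.mul_const t).neg.mul (hZmeas.comp measurable_snd)).exp).stronglyMeasurable
    calc ∫ ω, Real.exp (-(W ω * t) * S ω) ∂P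
        = ∫ p, f p ∂(P.map (fun ω => (W ω, S ω))) := by
          rw [integral_map (hWmeas.aemeasurable.prodMk hSmeas.aemeasurable)
            hfmeas.aestronglyMeasurable]
      _ = ∫ p, f p ∂((P.map W).prod (P.map S)) := by rw [hmap]
      _ = ∫ w, ∫ s, f (w, s) ∂(P.map S) ∂(P.map W) := integral_prod f hfint
      _ = ∫ w, (∫ ω', Real.exp (-(w * t) * Z ω') ∂P) ^ b ∂(P.map W) := by
          refine integral_congr_ae (Filter.Eventually.of_forall fun w => ?_)
          exact hL w
      _ = ∫ ω, (∫ ω', Real.exp (-(W ω * t) * Z ω') ∂P) ^ b ∂P := by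
          rw [integral_map hWmeas.aemeasurable (hmeasg.measurable.pow_const b).aestronglyMeasurable]
  rw [← hstep2]
  exact hstep1
end

section
/- Fix an integer b ≥ 2 and constants β > 0, η > 0 and η' > 2η. Let (ε_n)_{n≥2} be a sequence of positive reals with ε_n ≥ (log n)^{−η} for every n ≥ 2, and for j ≥ 2 set S_j = ⌊j (log j)^{η'}⌋ and ρ_j = (log j)^{1+η}. Then the double series ∑_{j≥2} b^{j} b^{ρ_j} ∑_{n≥S_j} n b^{−β n ε_n^2} converges. -/
/-- `S_j = ⌊j (log j)^{η'}⌋`. -/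
noncomputable def Sgrowth' (η' : ℝ) (j : ℕ) : ℕ :=
  ⌊(j : ℝ) * Real.log j ^ η'⌋₊

/-- The general term `n b^{-β n ε_n²}`. -/
noncomputable def termG (b : ℕ) (β : ℝ) (ε : ℕ → ℝ) (n : ℕ) : ℝ :=
  (n : ℝ) * (b : ℝ) ^ (-(β * (n : ℝ) * ε n ^ 2))

open Real Filter Asymptotics

set_option linter.unusedVariables false

private noncomputable def phiAux (η x : ℝ) : ℝ := x * Real.log x ^ (-(2*η))

private lemma phiAux_mono (η : ℝ) (hη : 0 < η) :
    MonotoneOn (phiAux η) (Set.Ici (Real.exp (2*η))) := by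
  have hsub : Set.Ici (Real.exp (2*η)) ⊆ {(0:ℝ)}ᶜ := by
    intro x hx
    simp only [Set.mem_compl_iff, Set.mem_singleton_iff]
    have := (Real.exp_pos (2*η)).trans_le hx
    linarith
  have hcont : ContinuousOn (phiAux η) (Set.Ici (Real.exp (2*η))) := by
    apply continuousOn_id.mul
    apply ContinuousOn.rpow_const (Real.continuousOn_log.mono hsub)
    intro x hx
    left
    have hx0 : (0:ℝ) < x := (Real.exp_pos _).trans_le hx
    have h2η : 2*η ≤ Real.log x := by
      have := Real.log_le_log (Real.exp_pos _) hx
      rwa [Real.log_exp] at this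
    have : 0 < Real.log x := by linarith
    exact this.ne'
  apply StrictMonoOn.monotoneOn
  apply strictMonoOn_of_deriv_pos (convex_Ici _) hcont
  intro x hx
  rw [interior_Ici] at hx
  have hx0 : (0:ℝ) < x := (Real.exp_pos _).trans hx
  have hlx : 2*η < Real.log x := by
    have := Real.log_lt_log (Real.exp_pos _) hx
    rwa [Real.log_exp] at this
  have hlx0 : 0 < Real.log x := by linarith
  have hlog : HasDerivAt Real.log x⁻¹ x := Real.hasDerivAt_log hx0.ne'
  have hpow : HasDerivAt (fun y => Real.log y ^ (-(2*η)))
      (x⁻¹ * (-(2*η)) * Real.log x ^ (-(2*η) - 1)) x :=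
    hlog.rpow_const (Or.inl hlx0.ne')
  have hmul : HasDerivAt (phiAux η)
      (1 * Real.log x ^ (-(2*η)) + x * (x⁻¹ * (-(2*η)) * Real.log x ^ (-(2*η) - 1))) x := by
    have := (hasDerivAt_id x).mul hpow
    exact this
  rw [hmul.deriv]
  have hL : Real.log x ^ (-(2*η)) = Real.log x ^ (-(2*η) - 1) * Real.log x := by
    rw [show -(2*η) = (-(2*η) - 1) + 1 by ring, Real.rpow_add_one hlx0.ne']
    norm_num
  have hP : 0 < Real.log x ^ (-(2*η) - 1) := Real.rpow_pos_of_pos hlx0 _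
  have hxx : x * (x⁻¹ * (-(2*η)) * Real.log x ^ (-(2*η) - 1))
      = (-(2*η)) * Real.log x ^ (-(2*η) - 1) := by
    field_simp
  rw [hxx, hL]
  nlinarith [hP, hlx]

private lemma summable_phiAux (b : ℕ) (hb : 2 ≤ b) (η : ℝ) (hη : 0 < η) (c : ℝ) (hc : 0 < c) :
    Summable (fun n : ℕ => (n : ℝ) * (b : ℝ) ^ (-(c * phiAux η (n : ℝ)))) := by
  have hb0 : (0:ℝ) < b := by positivity
  have hb1 : (1:ℝ) < b := by exact_mod_cast lt_of_lt_of_le one_lt_two hb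
  have hlog2 : (0:ℝ) < Real.log 2 := Real.log_pos one_lt_two
  have hK : (0:ℝ) < c * Real.log 2 / 3 := by positivity
  have hlo : ∀ᶠ x : ℝ in atTop, ‖Real.log x ^ (1 + 2*η)‖ ≤ (c * Real.log 2 / 3) * ‖x ^ (1:ℝ)‖ :=
    (isLittleO_log_rpow_rpow_atTop (s := 1) (1 + 2*η) one_pos).bound hK
  have hev : ∀ᶠ n : ℕ in atTop,
      ‖(n : ℝ) * (b : ℝ) ^ (-(c * phiAux η (n : ℝ)))‖ ≤ 1 * ‖1 / ((n:ℝ)^2)‖ := by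
    filter_upwards [tendsto_natCast_atTop_atTop.eventually hlo, eventually_ge_atTop 3]
      with n hlo' hn3
    have hn0 : (0:ℝ) < n := by positivity
    have hn1 : (1:ℝ) < n := by exact_mod_cast lt_of_lt_of_le (by norm_num : (1:ℕ) < 3) hn3
    have hL0 : 0 < Real.log n := Real.log_pos hn1
    -- from the littleO bound
    have h1 : Real.log n ^ (1 + 2*η) ≤ (c * Real.log 2 / 3) * n := by
      have h := hlo'
      rw [Real.norm_eq_abs, Real.norm_eq_abs, Real.rpow_one,
        abs_of_nonneg (Real.rpow_nonneg hL0.le _), abs_of_nonneg hn0.le] at h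
      exact h
    -- multiply by (log n)^(-2η)
    have h2 : Real.log n ≤ (c * Real.log 2 / 3) * phiAux η n := by
      have hpos : (0:ℝ) < Real.log n ^ (-(2*η)) := Real.rpow_pos_of_pos hL0 _
      have := mul_le_mul_of_nonneg_right h1 hpos.le
      rwa [show Real.log ↑n ^ (1 + 2*η) * Real.log ↑n ^ (-(2*η)) = Real.log n by
          rw [← Real.rpow_add hL0]; norm_num,
        show c * Real.log 2 / 3 * ↑n * Real.log ↑n ^ (-(2*η))
          = c * Real.log 2 / 3 * phiAux η n by rw [phiAux]; ring] at this
    have hφnn : 0 ≤ phiAux η n := by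
      unfold phiAux; positivity
    have h3 : 3 * Real.log n ≤ c * Real.log b * phiAux η n := by
      have hlb : Real.log 2 ≤ Real.log b := by
        apply Real.log_le_log two_pos; exact_mod_cast hb
      nlinarith
    -- conclude: b ^ (c φ n) ≥ n^3
    have h4 : (n:ℝ) ^ (3:ℝ) ≤ (b:ℝ) ^ (c * phiAux η n) := by
      rw [Real.rpow_def_of_pos hn0, Real.rpow_def_of_pos hb0]
      apply Real.exp_le_exp.mpr
      nlinarith [Real.log_nonneg hn1.le]
    have h5 : (n : ℝ) * (b : ℝ) ^ (-(c * phiAux η (n : ℝ))) ≤ 1 / ((n:ℝ)^2) := by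
      rw [Real.rpow_neg hb0.le]
      rw [show (1:ℝ) / ((n:ℝ)^2) = (n:ℝ) * ((n:ℝ)^(3:ℝ))⁻¹ by
        rw [show ((n:ℝ))^(3:ℝ) = (n:ℝ)^(3:ℕ) from Real.rpow_natCast _ 3]
        field_simp]
      apply mul_le_mul_of_nonneg_left _ hn0.le
      apply inv_anti₀ (by positivity) h4
    rw [Real.norm_eq_abs, Real.norm_eq_abs, abs_of_nonneg (by positivity),
      abs_of_nonneg (by positivity), one_mul]
    exact h5
  apply summable_of_isBigO_nat (g := fun n => 1 / ((n:ℝ)^2))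
    (summable_one_div_nat_pow.mpr one_lt_two)
  exact isBigO_iff.mpr ⟨1, hev⟩

private lemma eventuallyFacts (β η η' : ℝ) (hβ : 0 < β) (hη : 0 < η) (hη' : 2*η < η') :
    ∀ᶠ k : ℕ in atTop,
      Real.exp (2*η) + 2 ≤ (Sgrowth' η' k : ℝ) ∧
      4 * (k:ℝ) ≤ (β/2) * phiAux η (Sgrowth' η' k) ∧
      Real.log k ^ (1+η) ≤ (k:ℝ) := by
  have hη'0 : 0 < η' := by linarith
  have hA0 : (0:ℝ) < (2:ℝ) ^ (1+2*η) := Real.rpow_pos_of_pos two_pos _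
  have hll : ∀ᶠ x : ℝ in atTop, ‖Real.log x‖ ≤ (1/η') * ‖x‖ := by
    have := isLittleO_log_id_atTop.bound (c := 1/η') (by positivity)
    simpa using this
  have hrho : ∀ᶠ x : ℝ in atTop, ‖Real.log x ^ (1+η)‖ ≤ 1 * ‖x ^ (1:ℝ)‖ :=
    (isLittleO_log_rpow_rpow_atTop (s := 1) (1+η) one_pos).bound one_pos
  have hbigf : ∀ᶠ x : ℝ in atTop, (2:ℝ) ^ (1+2*η) * (8/β) ≤ Real.log x ^ (η' - 2*η) :=
    ((tendsto_rpow_atTop (by linarith : (0:ℝ) < η' - 2*η)).comp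
      tendsto_log_atTop).eventually_ge_atTop _
  filter_upwards [eventually_ge_atTop 3,
    tendsto_natCast_atTop_atTop.eventually_ge_atTop (2*(Real.exp (2*η) + 2)),
    (tendsto_log_atTop.comp tendsto_natCast_atTop_atTop).eventually hll,
    tendsto_natCast_atTop_atTop.eventually hrho,
    tendsto_natCast_atTop_atTop.eventually hbigf]
    with k hk3 hcast hllk hrhok hbigk
  have hk0 : (0:ℝ) < k := by positivity
  have hk1 : (1:ℝ) < k := by exact_mod_cast lt_of_lt_of_le (by norm_num : (1:ℕ) < 3) hk3
  have hL1 : 1 ≤ Real.log k := by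
    have h3 : (3:ℝ) ≤ (k:ℝ) := by exact_mod_cast hk3
    have : Real.log 3 ≤ Real.log k := Real.log_le_log (by norm_num) h3
    have h1 : 1 ≤ Real.log 3 := by
      rw [Real.le_log_iff_exp_le (by norm_num)]
      exact le_trans Real.exp_one_lt_d9.le (by norm_num)
    linarith
  have hL0 : 0 < Real.log k := by linarith
  have hLη' : 1 ≤ Real.log k ^ η' := by
    have := Real.rpow_le_rpow_of_exponent_le hL1 hη'0.le
    rwa [Real.rpow_zero] at this
  set S := Sgrowth' η' k with hSdef
  have hS_lb : (k:ℝ)/2 * Real.log k ^ η' ≤ (S:ℝ) := by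
    have hfl := Nat.sub_one_lt_floor ((k:ℝ) * Real.log k ^ η')
    have hk3' : (3:ℝ) ≤ (k:ℝ) := by exact_mod_cast hk3
    have : (1:ℝ) ≤ (k:ℝ)/2 * Real.log k ^ η' := by nlinarith
    rw [hSdef, Sgrowth']
    nlinarith [hfl]
  have hS_half : (k:ℝ)/2 ≤ (S:ℝ) := by nlinarith
  have hSexp : Real.exp (2*η) + 2 ≤ (S:ℝ) := by linarith
  refine ⟨hSexp, ?_, ?_⟩
  · -- main growth bound
    have hS0 : (0:ℝ) < (S:ℝ) := by nlinarith [Real.exp_pos (2*η)]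
    have hS1 : (1:ℝ) < (S:ℝ) := by nlinarith [Real.exp_pos (2*η)]
    have hS_ub : (S:ℝ) ≤ (k:ℝ) * Real.log k ^ η' := by
      rw [hSdef, Sgrowth']
      exact Nat.floor_le (by positivity)
    have hlogS_pos : 0 < Real.log (S:ℝ) := Real.log_pos hS1
    have hlogS : Real.log (S:ℝ) ≤ 2 * Real.log k := by
      have h1 : Real.log (S:ℝ) ≤ Real.log ((k:ℝ) * Real.log k ^ η') :=
        Real.log_le_log hS0 hS_ub
      rw [Real.log_mul (by positivity) (by positivity), Real.log_rpow hL0] at h1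
      have h2 : η' * Real.log (Real.log k) ≤ Real.log k := by
        have h3 := hllk
        simp only [Function.comp_apply, Real.norm_eq_abs] at h3
        have h4 : Real.log (Real.log (k:ℝ)) ≤ (1/η') * Real.log k := by
          calc Real.log (Real.log (k:ℝ)) ≤ |Real.log (Real.log (k:ℝ))| := le_abs_self _
            _ ≤ (1/η') * |Real.log (k:ℝ)| := h3
            _ = (1/η') * Real.log k := by rw [abs_of_pos hL0]
        calc η' * Real.log (Real.log k) ≤ η' * ((1/η') * Real.log k) := by
              apply mul_le_mul_of_nonneg_left h4 hη'0.le
          _ = Real.log k := by field_simp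
      linarith
    -- lower bound phi at S
    have hpow_le : (2 * Real.log k) ^ (-(2*η)) ≤ Real.log (S:ℝ) ^ (-(2*η)) :=
      Real.rpow_le_rpow_of_nonpos hlogS_pos hlogS (by linarith)
    have hphiS : (2:ℝ) ^ (-(1+2*η)) * ((k:ℝ) * Real.log k ^ (η' - 2*η)) ≤ phiAux η S := by
      have hmm : (k:ℝ)/2 * Real.log k ^ η' * ((2 * Real.log k) ^ (-(2*η)))
          ≤ (S:ℝ) * Real.log (S:ℝ) ^ (-(2*η)) := by
        apply mul_le_mul hS_lb hpow_le (Real.rpow_nonneg (by positivity) _) hS0.le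
      have e1 : ((2:ℝ) * Real.log k) ^ (-(2*η))
          = (2:ℝ) ^ (-(2*η)) * Real.log k ^ (-(2*η)) :=
        Real.mul_rpow (by norm_num) hL0.le
      have e2 : Real.log k ^ (η' - 2*η) = Real.log k ^ η' * Real.log k ^ (-(2*η)) := by
        rw [← Real.rpow_add hL0]; ring_nf
      have e3 : (2:ℝ) ^ (-(1+2*η)) = 2⁻¹ * (2:ℝ) ^ (-(2*η)) := by
        rw [show -(1+2*η) = (-1) + (-(2*η)) by ring, Real.rpow_add two_pos,
          Real.rpow_neg_one]
      calc (2:ℝ) ^ (-(1+2*η)) * ((k:ℝ) * Real.log k ^ (η' - 2*η))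
          = (k:ℝ)/2 * Real.log k ^ η' * ((2 * Real.log k) ^ (-(2*η))) := by
            rw [e1, e2, e3]; ring
        _ ≤ (S:ℝ) * Real.log (S:ℝ) ^ (-(2*η)) := hmm
        _ = phiAux η S := rfl
    have hbigk' : (2:ℝ) ^ (1+2*η) * (8/β) ≤ Real.log k ^ (η' - 2*η) := by
      simpa using hbigk
    have haA : (2:ℝ) ^ (-(1+2*η)) * (2:ℝ) ^ (1+2*η) = 1 := by
      rw [← Real.rpow_add two_pos, show -(1+2*η)+(1+2*η) = 0 by ring, Real.rpow_zero]
    have ha0 : (0:ℝ) < (2:ℝ) ^ (-(1+2*η)) := Real.rpow_pos_of_pos two_pos _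
    have hstep : (2:ℝ) ^ (-(1+2*η)) * ((k:ℝ) * ((2:ℝ) ^ (1+2*η) * (8/β)))
        ≤ (2:ℝ) ^ (-(1+2*η)) * ((k:ℝ) * Real.log k ^ (η' - 2*η)) := by
      apply mul_le_mul_of_nonneg_left _ ha0.le
      exact mul_le_mul_of_nonneg_left hbigk' hk0.le
    have hlhs : (2:ℝ) ^ (-(1+2*η)) * ((k:ℝ) * ((2:ℝ) ^ (1+2*η) * (8/β))) = (8/β) * k := by
      linear_combination ((k:ℝ) * (8/β)) * haA
    have h8 : (8/β) * (k:ℝ) ≤ phiAux η S := by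
      rw [← hlhs]; exact le_trans hstep hphiS
    have h9 : (β/2) * ((8/β) * (k:ℝ)) ≤ (β/2) * phiAux η S :=
      mul_le_mul_of_nonneg_left h8 (by positivity)
    have h10 : (β/2) * ((8/β) * (k:ℝ)) = 4 * (k:ℝ) := by field_simp; ring
    linarith
  · -- log k ^ (1+η) ≤ k
    have h := hrhok
    simp only [Real.norm_eq_abs, Real.rpow_one, one_mul] at h
    calc Real.log k ^ (1+η) ≤ |Real.log (k:ℝ) ^ (1+η)| := le_abs_self _
      _ ≤ |(k:ℝ)| := h
      _ = (k:ℝ) := abs_of_pos hk0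

/-- If `ε_n ≥ (log n)^{-η}`, `S_j = ⌊j (log j)^{η'}⌋` with `η' > 2η` and
`ρ_j = (log j)^{1+η}`, then `∑_{j≥2} b^j b^{ρ_j} ∑_{n≥S_j} n b^{-β n ε_n²} < ∞`
(inner series summable for each `j ≥ 2`, and the outer series summable). -/
theorem double_series_converges_slow_eps
    (b : ℕ) (hb : 2 ≤ b) (β η η' : ℝ) (hβ : 0 < β) (hη : 0 < η) (hη' : 2 * η < η')
    (ε : ℕ → ℝ) (hεpos : ∀ n, 2 ≤ n → 0 < ε n)
    (hε : ∀ n : ℕ, 2 ≤ n → Real.log n ^ (-η) ≤ ε n) :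
    (∀ j : ℕ, 2 ≤ j → Summable fun n : ℕ => termG b β ε (Sgrowth' η' j + n)) ∧
    Summable (fun j : ℕ => (b : ℝ) ^ (j + 2) *
      (b : ℝ) ^ (Real.log ((j : ℝ) + 2) ^ (1 + η)) *
      ∑' n : ℕ, termG b β ε (Sgrowth' η' (j + 2) + n)) := by
  have hb0 : (0:ℝ) < b := by positivity
  have hb1 : (1:ℝ) < b := by exact_mod_cast lt_of_lt_of_le one_lt_two hb
  -- pointwise comparison
  have hcomp : ∀ m : ℕ, 2 ≤ m →
      termG b β ε m ≤ (m:ℝ) * (b:ℝ) ^ (-(β * phiAux η (m:ℝ))) := by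
    intro m hm
    have hm1 : (1:ℝ) < m := by exact_mod_cast hm
    have hm0 : (0:ℝ) ≤ m := by positivity
    have hlm : 0 < Real.log m := Real.log_pos hm1
    have hε1 : Real.log m ^ (-η) ≤ ε m := hε m hm
    have hε0 : 0 < Real.log m ^ (-η) := Real.rpow_pos_of_pos hlm _
    have hsq : Real.log m ^ (-(2*η)) ≤ ε m ^ 2 := by
      have h2 : Real.log m ^ (-(2*η)) = Real.log m ^ (-η) * Real.log m ^ (-η) := by
        rw [← Real.rpow_add hlm]; ring_nf
      rw [h2, sq]
      exact mul_le_mul hε1 hε1 hε0.le (le_trans hε0.le hε1)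
    unfold termG
    apply mul_le_mul_of_nonneg_left _ hm0
    rw [Real.rpow_le_rpow_left_iff hb1]
    unfold phiAux
    nlinarith [mul_le_mul_of_nonneg_left hsq (mul_nonneg hβ.le hm0)]
  -- summable comparison series
  set g2 : ℕ → ℝ := fun m => (m:ℝ) * (b:ℝ) ^ (-(β/2 * phiAux η (m:ℝ))) with hg2
  have hsumβ : Summable (fun n : ℕ => (n:ℝ) * (b:ℝ) ^ (-(β * phiAux η (n:ℝ)))) :=
    summable_phiAux b hb η hη β hβ
  have hsumg2 : Summable g2 := summable_phiAux b hb η hη (β/2) (by positivity)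
  have htnn : ∀ m, 0 ≤ termG b β ε m := fun m =>
    mul_nonneg (Nat.cast_nonneg m) (Real.rpow_nonneg hb0.le _)
  have hsumT : Summable (termG b β ε) := by
    rw [← summable_nat_add_iff 2]
    exact Summable.of_nonneg_of_le (fun n => htnn _) (fun n => hcomp (n+2) (by omega))
      ((summable_nat_add_iff 2).mpr hsumβ)
  have part1 : ∀ j : ℕ, 2 ≤ j → Summable fun n : ℕ => termG b β ε (Sgrowth' η' j + n) := by
    intro j _
    have hinj : Function.Injective (fun n : ℕ => Sgrowth' η' j + n) := fun a a' h => by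
      simpa using h
    exact hsumT.comp_injective hinj
  refine ⟨part1, ?_⟩
  set C2 : ℝ := ∑' m, g2 m with hC2
  have hg2nn : ∀ m, 0 ≤ g2 m := fun m =>
    mul_nonneg (Nat.cast_nonneg m) (Real.rpow_nonneg hb0.le _)
  have hC2nn : 0 ≤ C2 := tsum_nonneg hg2nn
  have hmono := phiAux_mono η hη
  have hev := (tendsto_add_atTop_nat 2).eventually (eventuallyFacts β η η' hβ hη hη')
  have hbound : ∀ᶠ j : ℕ in atTop,
      ‖(b : ℝ) ^ (j + 2) * (b : ℝ) ^ (Real.log ((j : ℝ) + 2) ^ (1 + η)) *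
        ∑' n : ℕ, termG b β ε (Sgrowth' η' (j + 2) + n)‖ ≤ C2 * ‖((b:ℝ)⁻¹)^j‖ := by
    filter_upwards [hev] with j hj
    obtain ⟨hSexp, hSbig, hrho⟩ := hj
    set k := j + 2 with hk
    set S := Sgrowth' η' k with hS
    have hSexp' : Real.exp (2*η) ≤ (S:ℝ) := by linarith
    have hS2 : 2 ≤ S := by
      have h2 : (2:ℝ) ≤ (S:ℝ) := by nlinarith [Real.exp_pos (2*η)]
      exact_mod_cast h2
    -- per-term bound in the tail
    have hterm : ∀ n : ℕ, termG b β ε (S + n) ≤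
        (b:ℝ) ^ (-(β/2 * phiAux η (S:ℝ))) * g2 (S + n) := by
      intro n
      have h1 : termG b β ε (S + n) ≤
          (((S+n:ℕ)):ℝ) * (b:ℝ) ^ (-(β * phiAux η (((S+n:ℕ)):ℝ))) := hcomp _ (by omega)
      have hφ : phiAux η (S:ℝ) ≤ phiAux η (((S+n:ℕ)):ℝ) := by
        have hc : (((S+n:ℕ)):ℝ) = (S:ℝ) + (n:ℝ) := by push_cast; ring
        rw [hc]
        exact hmono (Set.mem_Ici.mpr hSexp')
          (Set.mem_Ici.mpr (by linarith [Nat.cast_nonneg (α := ℝ) n]))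
          (by linarith [Nat.cast_nonneg (α := ℝ) n])
      have h2 : (b:ℝ) ^ (-(β * phiAux η (((S+n:ℕ)):ℝ)))
          ≤ (b:ℝ) ^ (-(β/2 * phiAux η (S:ℝ))) * (b:ℝ) ^ (-(β/2 * phiAux η (((S+n:ℕ)):ℝ))) := by
        rw [← Real.rpow_add hb0, Real.rpow_le_rpow_left_iff hb1]
        have h3 : (β/2) * phiAux η (S:ℝ) ≤ (β/2) * phiAux η (((S+n:ℕ)):ℝ) :=
          mul_le_mul_of_nonneg_left hφ (by positivity)
        linarith
      calc termG b β ε (S + n) ≤ _ := h1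
        _ ≤ (((S+n:ℕ)):ℝ) * ((b:ℝ) ^ (-(β/2 * phiAux η (S:ℝ))) *
              (b:ℝ) ^ (-(β/2 * phiAux η (((S+n:ℕ)):ℝ)))) :=
            mul_le_mul_of_nonneg_left h2 (Nat.cast_nonneg _)
        _ = (b:ℝ) ^ (-(β/2 * phiAux η (S:ℝ))) * g2 (S + n) := by rw [hg2]; ring
    have hinj : Function.Injective (fun n : ℕ => S + n) := fun a a' h => by simpa using h
    have hsum_shift : Summable (fun n : ℕ => g2 (S + n)) := hsumg2.comp_injective hinj
    have hTle : (∑' n : ℕ, termG b β ε (S + n)) ≤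
        (b:ℝ) ^ (-(β/2 * phiAux η (S:ℝ))) * C2 := by
      have hs1 : Summable (fun n : ℕ => termG b β ε (S + n)) := part1 k (by omega)
      have hs2 : Summable (fun n : ℕ => (b:ℝ) ^ (-(β/2 * phiAux η (S:ℝ))) * g2 (S + n)) :=
        hsum_shift.mul_left _
      calc (∑' n : ℕ, termG b β ε (S + n))
          ≤ ∑' n : ℕ, (b:ℝ) ^ (-(β/2 * phiAux η (S:ℝ))) * g2 (S + n) :=
            Summable.tsum_le_tsum hterm hs1 hs2
        _ = (b:ℝ) ^ (-(β/2 * phiAux η (S:ℝ))) * ∑' n : ℕ, g2 (S + n) := tsum_mul_left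
        _ ≤ (b:ℝ) ^ (-(β/2 * phiAux η (S:ℝ))) * C2 := by
            apply mul_le_mul_of_nonneg_left _ (Real.rpow_nonneg hb0.le _)
            exact Summable.tsum_le_tsum_of_inj (fun n => S + n) hinj
              (fun c _ => hg2nn c) (fun n => le_refl _) hsum_shift hsumg2
    -- putting it together
    have hjk : ((j:ℝ) + 2) = (k:ℝ) := by rw [hk]; push_cast; ring
    have hexp : (k:ℝ) + Real.log (k:ℝ) ^ (1+η) + (-(β/2 * phiAux η (S:ℝ))) ≤ -(j:ℝ) := by
      have hjk' : (j:ℝ) ≤ (k:ℝ) := by rw [hk]; push_cast; linarith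
      have hk0 : (0:ℝ) ≤ (k:ℝ) := Nat.cast_nonneg k
      linarith [hSbig, hrho]
    have hFle : (b : ℝ) ^ (j + 2) * (b : ℝ) ^ (Real.log ((j : ℝ) + 2) ^ (1 + η)) *
        (∑' n : ℕ, termG b β ε (S + n)) ≤ C2 * ((b:ℝ)⁻¹)^j := by
      have e1 : (b:ℝ) ^ (j + 2) = (b:ℝ) ^ ((k:ℕ):ℝ) := by
        rw [Real.rpow_natCast, hk]
      have e2 : Real.log ((j:ℝ) + 2) = Real.log (k:ℝ) := by rw [hjk]
      calc (b : ℝ) ^ (j + 2) * (b : ℝ) ^ (Real.log ((j : ℝ) + 2) ^ (1 + η)) *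
            (∑' n : ℕ, termG b β ε (S + n))
          ≤ (b : ℝ) ^ (j + 2) * (b : ℝ) ^ (Real.log ((j : ℝ) + 2) ^ (1 + η)) *
            ((b:ℝ) ^ (-(β/2 * phiAux η (S:ℝ))) * C2) := by
            apply mul_le_mul_of_nonneg_left hTle
            exact mul_nonneg (by positivity) (Real.rpow_nonneg hb0.le _)
        _ = C2 * (b:ℝ) ^ ((k:ℝ) + Real.log (k:ℝ) ^ (1+η) + (-(β/2 * phiAux η (S:ℝ)))) := by
            rw [e1, e2, Real.rpow_add hb0, Real.rpow_add hb0]; ring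
        _ ≤ C2 * (b:ℝ) ^ (-(j:ℝ)) := by
            apply mul_le_mul_of_nonneg_left _ hC2nn
            exact (Real.rpow_le_rpow_left_iff hb1).mpr hexp
        _ = C2 * ((b:ℝ)⁻¹)^j := by
            rw [Real.rpow_neg hb0.le, Real.rpow_natCast, inv_pow]
    rw [Real.norm_eq_abs, Real.norm_eq_abs, abs_of_nonneg, abs_of_nonneg]
    · exact hFle
    · positivity
    · apply mul_nonneg (mul_nonneg (by positivity) (Real.rpow_nonneg hb0.le _))
      exact tsum_nonneg (fun n => htnn _)
  apply summable_of_isBigO_nat (g := fun j => ((b:ℝ)⁻¹)^j)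
  · apply summable_geometric_of_lt_one (by positivity)
    rw [inv_lt_one_iff₀]
    right; exact hb1
  · exact isBigO_iff.mpr ⟨C2, hbound⟩
end
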